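/- arXiv:1005.5127 — 7 statements merged into one kernel-verified Lean document; each statement's English description precedes it below -/
import Mathlib

section
/- Let θ : ℝ^d → [0,∞) be a log-concave, locally Lebesgue-integrable function and let ρ be the measure on ℝ^d with density θ with respect to Lebesgue measure. Then ρ satisfies the Prékopa–Leindler property: for all s, t ≥ 0 with s + t = 1 and all nonnegative continuous compactly supported functions a, b, c on ℝ^d such that a(s·x + t·y) ≥ b(x)^s · c(y)^t for all x, y ∈ ℝ^d, one has ∫ a dρ ≥ (∫ b dρ)^s · (∫ c dρ)^t. -/
open MeasureTheory Pointwise ENNReal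

noncomputable section

/-- A nonnegative function is log-concave if `f x ^ s * f y ^ t ≤ f (s • x + t • y)`
for all `x, y` and all `s, t ≥ 0` with `s + t = 1`. -/
def IsLogConcave {E : Type*} [AddCommGroup E] [Module ℝ E] (f : E → ℝ) : Prop :=
  ∀ x y : E, ∀ s t : ℝ, 0 ≤ s → 0 ≤ t → s + t = 1 →
    f x ^ s * f y ^ t ≤ f (s • x + t • y)

/-- The Prékopa–Leindler property of a measure, tested on nonnegative continuous
compactly supported functions. -/
def PrekopaLeindler {E : Type*} [AddCommGroup E] [Module ℝ E] [TopologicalSpace E]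
    [MeasurableSpace E] (ρ : Measure E) : Prop :=
  ∀ s t : ℝ, 0 ≤ s → 0 ≤ t → s + t = 1 →
    ∀ a b c : E → ℝ, Continuous a → Continuous b → Continuous c →
      HasCompactSupport a → HasCompactSupport b → HasCompactSupport c →
      (∀ x, 0 ≤ a x) → (∀ x, 0 ≤ b x) → (∀ x, 0 ≤ c x) →
      (∀ x y, b x ^ s * c y ^ t ≤ a (s • x + t • y)) →
      (∫ x, b x ∂ρ) ^ s * (∫ x, c x ∂ρ) ^ t ≤ ∫ x, a x ∂ρ

section PLEAux

open NNReal Set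

lemma bm_compact {K L : Set ℝ} (hK : IsCompact K) (hL : IsCompact L)
    (hKne : K.Nonempty) (hLne : L.Nonempty) :
    volume K + volume L ≤ volume (K + L) := by
  have hk : sSup K ∈ K := hK.sSup_mem hKne
  have hl : sInf L ∈ L := hL.sInf_mem hLne
  set k := sSup K with hkdef
  set l := sInf L with hldef
  have hU : l +ᵥ K ⊆ K + L := by
    rintro z ⟨x, hx, rfl⟩
    exact ⟨x, hx, l, hl, add_comm x l⟩
  have hV : k +ᵥ L ⊆ K + L := by
    rintro z ⟨y, hy, rfl⟩
    exact ⟨k, hk, y, hy, rfl⟩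
  have hInter : (l +ᵥ K) ∩ (k +ᵥ L) ⊆ {l + k} := by
    rintro z ⟨⟨x, hx, rfl⟩, ⟨y, hy, hz⟩⟩
    simp only [vadd_eq_add] at hz ⊢
    have h1 := le_csSup hK.bddAbove hx
    have h2 := csInf_le hL.bddBelow hy
    have : l + x = l + k := by
      simp only [hkdef, hldef] at hz ⊢
      linarith
    simp [this]
  have hmeas : MeasurableSet (k +ᵥ L) := (hL.vadd k).isClosed.measurableSet
  calc volume K + volume L = volume (l +ᵥ K) + volume (k +ᵥ L) := by
        rw [measure_vadd, measure_vadd]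
    _ = volume ((l +ᵥ K) ∪ (k +ᵥ L)) + volume ((l +ᵥ K) ∩ (k +ᵥ L)) :=
        (measure_union_add_inter _ hmeas).symm
    _ ≤ volume (K + L) + 0 := by
        gcongr
        · exact union_subset hU hV
        · exact le_trans (measure_mono hInter) (by simp)
    _ = volume (K + L) := by simp

lemma bm_one_dim {A B : Set ℝ} (hA : MeasurableSet A) (hB : MeasurableSet B)
    (hAne : A.Nonempty) (hBne : B.Nonempty) :
    volume A + volume B ≤ volume (A + B) := by
  have key : ∀ K ⊆ A, IsCompact K → ∀ L ⊆ B, IsCompact L →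
      volume K + volume L ≤ volume (A + B) := by
    intro K hKA hK L hLB hL
    rcases K.eq_empty_or_nonempty with rfl | hKne
    · obtain ⟨a, ha⟩ := hAne
      simp only [measure_empty, zero_add]
      calc volume L = volume (a +ᵥ L) := (measure_vadd _ _ _).symm
        _ ≤ volume (A + B) := measure_mono fun z => by
            rintro ⟨y, hy, rfl⟩; exact ⟨a, ha, y, hLB hy, rfl⟩
    rcases L.eq_empty_or_nonempty with rfl | hLne
    · obtain ⟨b, hb⟩ := hBne
      simp only [measure_empty, add_zero]
      calc volume K = volume (b +ᵥ K) := (measure_vadd _ _ _).symm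
        _ ≤ volume (A + B) := measure_mono fun z => by
            rintro ⟨x, hx, rfl⟩; exact ⟨x, hKA hx, b, hb, add_comm x b⟩
    calc volume K + volume L ≤ volume (K + L) := bm_compact hK hL hKne hLne
      _ ≤ volume (A + B) := measure_mono (add_subset_add hKA hLB)
  rw [hA.measure_eq_iSup_isCompact, hB.measure_eq_iSup_isCompact]
  refine ENNReal.biSup_add_biSup_le' (p := fun K => K ⊆ A) (q := fun L => L ⊆ B)
    ⟨∅, empty_subset _⟩ ⟨∅, empty_subset _⟩ ?_
  intro K hKA L hLB
  by_cases hK : IsCompact K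
  · by_cases hL : IsCompact L
    · rw [iSup_pos hK, iSup_pos hL]
      exact key K hKA hK L hLB hL
    · rw [iSup_pos hK, iSup_neg hL, ENNReal.bot_eq_zero, add_zero]
      refine le_trans ?_ (key K hKA hK ∅ (empty_subset _) isCompact_empty)
      simp
  · rw [iSup_neg hK, ENNReal.bot_eq_zero, zero_add]
    by_cases hL : IsCompact L
    · rw [iSup_pos hL]
      refine le_trans ?_ (key ∅ (empty_subset _) isCompact_empty L hLB hL)
      simp
    · simp [iSup_neg hL]

lemma layercake_ennreal {α : Type*} [MeasurableSpace α] (μ : Measure α) [SigmaFinite μ]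
    {f : α → ℝ≥0∞} (hf : Measurable f) :
    ∫⁻ x, f x ∂μ = ∫⁻ r in Ioi (0:ℝ), μ {x | ENNReal.ofReal r < f x} := by
  have mset : MeasurableSet {q : α × ℝ | ENNReal.ofReal q.2 < f q.1} :=
    measurableSet_lt (ENNReal.measurable_ofReal.comp measurable_snd) (hf.comp measurable_fst)
  have m1 : Measurable (fun p : α × ℝ =>
      ({q : α × ℝ | ENNReal.ofReal q.2 < f q.1}.indicator (1 : α × ℝ → ℝ≥0∞) p)) :=
    measurable_one.indicator mset
  have key : ∀ x, (∫⁻ r in Ioi (0:ℝ),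
      ({q : α × ℝ | ENNReal.ofReal q.2 < f q.1}.indicator (1 : α × ℝ → ℝ≥0∞) (x, r)) ∂volume)
      = f x := by
    intro x
    have heq : ∀ r : ℝ, ({q : α × ℝ | ENNReal.ofReal q.2 < f q.1}.indicator
        (1 : α × ℝ → ℝ≥0∞) (x, r)) =
        ({r : ℝ | ENNReal.ofReal r < f x}.indicator (1 : ℝ → ℝ≥0∞) r) := by
      intro r
      by_cases h : ENNReal.ofReal r < f x <;> simp [indicator, h]
    simp_rw [heq]
    have hms : MeasurableSet {r : ℝ | ENNReal.ofReal r < f x} :=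
      ENNReal.measurable_ofReal measurableSet_Iio
    rw [lintegral_indicator_one hms, Measure.restrict_apply hms]
    rcases eq_or_ne (f x) ∞ with h | h
    · have heq2 : {r : ℝ | ENNReal.ofReal r < f x} ∩ Ioi 0 = Ioi 0 := by
        ext r; simp [h]
      rw [heq2, Real.volume_Ioi, h]
    · have heq2 : {r : ℝ | ENNReal.ofReal r < f x} ∩ Ioi 0 = Ioo 0 ((f x).toReal) := by
        ext r
        simp only [mem_inter_iff, mem_setOf_eq, mem_Ioi, mem_Ioo]
        constructor
        · rintro ⟨h1, h2⟩; exact ⟨h2, (ENNReal.ofReal_lt_iff_lt_toReal h2.le h).mp h1⟩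
        · rintro ⟨h1, h2⟩; exact ⟨(ENNReal.ofReal_lt_iff_lt_toReal h1.le h).mpr h2, h1⟩
      rw [heq2, Real.volume_Ioo, sub_zero, ENNReal.ofReal_toReal h]
  calc ∫⁻ x, f x ∂μ
      = ∫⁻ x, (∫⁻ r in Ioi (0:ℝ),
          ({q : α × ℝ | ENNReal.ofReal q.2 < f q.1}.indicator (1 : α × ℝ → ℝ≥0∞) (x, r))
          ∂volume) ∂μ := by
        simp_rw [key]
    _ = ∫⁻ r in Ioi (0:ℝ), (∫⁻ x,
          ({q : α × ℝ | ENNReal.ofReal q.2 < f q.1}.indicator (1 : α × ℝ → ℝ≥0∞) (x, r)) ∂μ)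
          ∂volume := by
        exact lintegral_lintegral_swap m1.aemeasurable
    _ = ∫⁻ r in Ioi (0:ℝ), μ {x | ENNReal.ofReal r < f x} := by
        apply lintegral_congr
        intro r
        have heq : ∀ x, ({q : α × ℝ | ENNReal.ofReal q.2 < f q.1}.indicator
            (1 : α × ℝ → ℝ≥0∞) (x, r)) =
            ({x : α | ENNReal.ofReal r < f x}.indicator (1 : α → ℝ≥0∞) x) := by
          intro x
          by_cases h : ENNReal.ofReal r < f x <;> simp [indicator, h]
        simp_rw [heq]
        exact lintegral_indicator_one (hf measurableSet_Ioi)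

lemma geom_ennreal {a b : ℝ≥0∞} {s t : ℝ} (hs : 0 ≤ s) (ht : 0 ≤ t) (hst : s + t = 1) :
    a ^ s * b ^ t ≤ ENNReal.ofReal s * a + ENNReal.ofReal t * b := by
  rcases eq_or_lt_of_le hs with rfl | hs'
  · have h1 : t = 1 := by linarith
    subst h1
    simp
  rcases eq_or_lt_of_le ht with rfl | ht'
  · have h1 : s = 1 := by linarith
    subst h1
    simp
  rcases eq_or_ne a ∞ with rfl | ha
  · have h1 : ENNReal.ofReal s * ∞ = ∞ :=
      ENNReal.mul_top (by simpa using ENNReal.ofReal_pos.2 hs' |>.ne')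
    rw [h1, top_add]
    exact le_top
  rcases eq_or_ne b ∞ with rfl | hb
  · have h1 : ENNReal.ofReal t * ∞ = ∞ :=
      ENNReal.mul_top (by simpa using ENNReal.ofReal_pos.2 ht' |>.ne')
    rw [h1, add_top]
    exact le_top
  rw [← ENNReal.coe_toNNReal ha, ← ENNReal.coe_toNNReal hb]
  set a' := a.toNNReal
  set b' := b.toNNReal
  have key := NNReal.geom_mean_le_arith_mean2_weighted s.toNNReal t.toNNReal a' b'
    (by rw [← Real.toNNReal_add hs ht, hst, Real.toNNReal_one])
  rw [Real.coe_toNNReal s hs, Real.coe_toNNReal t ht] at key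
  calc (a' : ℝ≥0∞) ^ s * (b' : ℝ≥0∞) ^ t
      = ((a' ^ s * b' ^ t : ℝ≥0) : ℝ≥0∞) := by
        rw [ENNReal.coe_mul, ENNReal.coe_rpow_of_nonneg _ hs, ENNReal.coe_rpow_of_nonneg _ ht]
    _ ≤ ((s.toNNReal * a' + t.toNNReal * b' : ℝ≥0) : ℝ≥0∞) := ENNReal.coe_le_coe.2 key
    _ = ENNReal.ofReal s * a' + ENNReal.ofReal t * b' := by
        rw [ENNReal.coe_add, ENNReal.coe_mul, ENNReal.coe_mul]; rfl

lemma iSup_rpow_ennreal {ι : Type*} (u : ι → ℝ≥0∞) {s : ℝ} (hs : 0 < s) :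
    (⨆ i, u i) ^ s = ⨆ i, u i ^ s := by
  apply le_antisymm
  · have h1 : ∀ i, u i ≤ (⨆ j, u j ^ s) ^ (1/s) := by
      intro i
      have : u i ^ s ≤ ⨆ j, u j ^ s := le_iSup (fun j => u j ^ s) i
      have h2 := ENNReal.rpow_le_rpow this (by positivity : (0:ℝ) ≤ 1/s)
      rwa [← ENNReal.rpow_mul, mul_one_div, div_self hs.ne', ENNReal.rpow_one] at h2
    have h2 : (⨆ i, u i) ≤ (⨆ j, u j ^ s) ^ (1/s) := iSup_le h1
    have h3 := ENNReal.rpow_le_rpow h2 hs.le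
    rwa [← ENNReal.rpow_mul, one_div_mul_cancel hs.ne', ENNReal.rpow_one] at h3
  · exact iSup_le fun i => ENNReal.rpow_le_rpow (le_iSup u i) hs.le

lemma iSup_mul_iSup_monotone (u v : ℕ → ℝ≥0∞) (hu : Monotone u) (hv : Monotone v) :
    (⨆ n, u n) * (⨆ n, v n) = ⨆ n, u n * v n := by
  apply le_antisymm
  · rw [ENNReal.iSup_mul]
    refine iSup_le fun n => ?_
    rw [ENNReal.mul_iSup]
    refine iSup_le fun m => ?_
    calc u n * v m ≤ u (max n m) * v (max n m) :=
          mul_le_mul' (hu (le_max_left n m)) (hv (le_max_right n m))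
      _ ≤ ⨆ k, u k * v k := le_iSup (fun k => u k * v k) (max n m)
  · exact iSup_le fun n => mul_le_mul' (le_iSup u n) (le_iSup v n)

lemma iSup_min_nat (a : ℝ≥0∞) : (⨆ n : ℕ, min a ((n:ℝ≥0∞) + 1)) = a := by
  apply le_antisymm (iSup_le fun n => min_le_left _ _)
  rcases eq_or_ne a ∞ with rfl | ha
  · calc (⊤:ℝ≥0∞) = ⨆ n : ℕ, (n:ℝ≥0∞) := ENNReal.iSup_natCast.symm
      _ ≤ ⨆ n : ℕ, min ⊤ ((n:ℝ≥0∞) + 1) := iSup_mono fun n => by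
          simp [min_eq_right (le_top : ((n:ℝ≥0∞)+1) ≤ ⊤)]
  · obtain ⟨n, hn⟩ := ENNReal.exists_nat_gt ha
    refine le_iSup_of_le n ?_
    rw [min_eq_left (le_trans hn.le (by simp))]

lemma vol_smul (c : ℝ) (A : Set ℝ) : volume (c • A) = ENNReal.ofReal |c| * volume A := by
  rw [Measure.addHaar_smul]
  simp

lemma ple_real_core {s t : ℝ} (hs : 0 < s) (ht : 0 < t) (hst : s + t = 1)
    (f g h : ℝ → ℝ≥0∞) (hf : Measurable f) (hg : Measurable g) (hh : Measurable h)
    (hyp : ∀ x y, f x ^ s * g y ^ t ≤ h (s • x + t • y))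
    (hF0 : (⨆ x, f x) ≠ 0) (hFtop : (⨆ x, f x) ≠ ∞)
    (hG0 : (⨆ x, g x) ≠ 0) (hGtop : (⨆ x, g x) ≠ ∞) :
    (∫⁻ x, f x) ^ s * (∫⁻ x, g x) ^ t ≤ ∫⁻ x, h x := by
  set F := ⨆ x, f x with hFdef
  set G := ⨆ x, g x with hGdef
  have hFs0 : F ^ s ≠ 0 := (ENNReal.rpow_pos (pos_iff_ne_zero.2 hF0) hFtop).ne'
  have hFstop : F ^ s ≠ ∞ := ENNReal.rpow_ne_top_of_nonneg hs.le hFtop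
  have hGt0 : G ^ t ≠ 0 := (ENNReal.rpow_pos (pos_iff_ne_zero.2 hG0) hGtop).ne'
  have hGttop : G ^ t ≠ ∞ := ENNReal.rpow_ne_top_of_nonneg ht.le hGtop
  set f' := fun x => f x / F with hf'def
  set g' := fun x => g x / G with hg'def
  set h' := fun x => h x / (F ^ s * G ^ t) with hh'def
  have hf' : Measurable f' := hf.div_const F
  have hg' : Measurable g' := hg.div_const G
  have hh' : Measurable h' := hh.div_const _
  have hf'le : ∀ x, f' x ≤ 1 := fun x =>
    ENNReal.div_le_of_le_mul (by rw [one_mul]; exact le_iSup f x)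
  have hg'le : ∀ x, g' x ≤ 1 := fun x =>
    ENNReal.div_le_of_le_mul (by rw [one_mul]; exact le_iSup g x)
  have hyp' : ∀ x y, f' x ^ s * g' y ^ t ≤ h' (s • x + t • y) := by
    intro x y
    rw [hf'def, hg'def, hh'def]
    simp only
    rw [ENNReal.div_rpow_of_nonneg _ _ hs.le, ENNReal.div_rpow_of_nonneg _ _ ht.le,
      div_eq_mul_inv, div_eq_mul_inv, div_eq_mul_inv,
      ENNReal.mul_inv (Or.inl hFs0) (Or.inl hFstop)]
    calc f x ^ s * (F ^ s)⁻¹ * (g y ^ t * (G ^ t)⁻¹)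
        = f x ^ s * g y ^ t * ((F ^ s)⁻¹ * (G ^ t)⁻¹) := by ring
      _ ≤ h (s • x + t • y) * ((F ^ s)⁻¹ * (G ^ t)⁻¹) :=
          mul_le_mul' (hyp x y) le_rfl
  -- superlevel sets
  set A := fun r : ℝ => {x : ℝ | ENNReal.ofReal r < f' x} with hAdef
  set B := fun r : ℝ => {x : ℝ | ENNReal.ofReal r < g' x} with hBdef
  set C := fun r : ℝ => {x : ℝ | ENNReal.ofReal r < h' x} with hCdef
  have hAm : ∀ r, MeasurableSet (A r) := fun r => hf' measurableSet_Ioi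
  have hBm : ∀ r, MeasurableSet (B r) := fun r => hg' measurableSet_Ioi
  have claim : ∀ r : ℝ, 0 < r → r < 1 →
      ENNReal.ofReal s * volume (A r) + ENNReal.ofReal t * volume (B r) ≤ volume (C r) := by
    intro r hr0 hr1
    have hsupf' : (⨆ x, f' x) = 1 := by
      rw [hf'def]
      simp only
      rw [← ENNReal.iSup_div, ← hFdef, ENNReal.div_self hF0 hFtop]
    have hsupg' : (⨆ x, g' x) = 1 := by
      rw [hg'def]
      simp only
      rw [← ENNReal.iSup_div, ← hGdef, ENNReal.div_self hG0 hGtop]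
    have hAne : (A r).Nonempty := by
      have : ENNReal.ofReal r < ⨆ x, f' x := by
        rw [hsupf']; exact ENNReal.ofReal_lt_one.2 hr1
      obtain ⟨x, hx⟩ := lt_iSup_iff.1 this
      exact ⟨x, hx⟩
    have hBne : (B r).Nonempty := by
      have : ENNReal.ofReal r < ⨆ x, g' x := by
        rw [hsupg']; exact ENNReal.ofReal_lt_one.2 hr1
      obtain ⟨x, hx⟩ := lt_iSup_iff.1 this
      exact ⟨x, hx⟩
    have hincl : s • A r + t • B r ⊆ C r := by
      rintro z ⟨x', ⟨x, hx, rfl⟩, y', ⟨y, hy, rfl⟩, rfl⟩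
      show ENNReal.ofReal r < h' (s • x + t • y)
      have hr : ENNReal.ofReal r ≠ 0 := (ENNReal.ofReal_pos.2 hr0).ne'
      calc ENNReal.ofReal r = ENNReal.ofReal r ^ (s + t) := by rw [hst, ENNReal.rpow_one]
        _ = ENNReal.ofReal r ^ s * ENNReal.ofReal r ^ t :=
            ENNReal.rpow_add _ _ hr ENNReal.ofReal_ne_top
        _ < f' x ^ s * g' y ^ t :=
            ENNReal.mul_lt_mul (ENNReal.rpow_lt_rpow hx hs) (ENNReal.rpow_lt_rpow hy ht)
        _ ≤ h' (s • x + t • y) := hyp' x y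
    calc ENNReal.ofReal s * volume (A r) + ENNReal.ofReal t * volume (B r)
        = volume (s • A r) + volume (t • B r) := by
          rw [vol_smul, vol_smul, abs_of_pos hs, abs_of_pos ht]
      _ ≤ volume (s • A r + t • B r) :=
          bm_one_dim ((hAm r).const_smul₀ s) ((hBm r).const_smul₀ t)
            (hAne.smul_set) (hBne.smul_set)
      _ ≤ volume (C r) := measure_mono hincl
  -- layer cake comparisons
  have hCanti : Antitone fun r : ℝ => volume (C r) := by
    intro r1 r2 h12
    apply measure_mono
    intro x hx
    exact lt_of_le_of_lt (ENNReal.ofReal_le_ofReal h12) hx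
  have hCmeas : Measurable fun r : ℝ => volume (C r) := hCanti.measurable
  have hAvanish : ∀ r : ℝ, 1 ≤ r → volume (A r) = 0 := by
    intro r hr
    have : A r = ∅ := by
      apply eq_empty_of_forall_notMem
      intro x hx
      exact absurd (lt_of_le_of_lt ((hf'le x).trans (ENNReal.one_le_ofReal.2 hr)) hx)
        (lt_irrefl _)
    rw [this, measure_empty]
  have hBvanish : ∀ r : ℝ, 1 ≤ r → volume (B r) = 0 := by
    intro r hr
    have : B r = ∅ := by
      apply eq_empty_of_forall_notMem
      intro x hx
      exact absurd (lt_of_le_of_lt ((hg'le x).trans (ENNReal.one_le_ofReal.2 hr)) hx)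
        (lt_irrefl _)
    rw [this, measure_empty]
  have hsplit : Ioi (0:ℝ) = Ioo 0 1 ∪ Ici 1 := by
    ext r
    simp only [mem_Ioi, mem_union, mem_Ioo, mem_Ici]
    constructor
    · intro h0
      rcases lt_or_ge r 1 with h1 | h1
      · exact Or.inl ⟨h0, h1⟩
      · exact Or.inr h1
    · rintro (⟨h0, _⟩ | h1)
      · exact h0
      · linarith
  have hdisj : Disjoint (Ioo (0:ℝ) 1) (Ici 1) := by
    rw [Set.disjoint_left]
    rintro r ⟨_, h1⟩ h2
    simp only [mem_Ici] at h2
    linarith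
  have hsplitA : (∫⁻ r in Ioi (0:ℝ), volume (A r)) = ∫⁻ r in Ioo (0:ℝ) 1, volume (A r) := by
    rw [hsplit, lintegral_union measurableSet_Ici hdisj]
    have : (∫⁻ r in Ici (1:ℝ), volume (A r)) = ∫⁻ r in Ici (1:ℝ), 0 := by
      apply setLIntegral_congr_fun measurableSet_Ici
      exact fun r hr => hAvanish r hr
    rw [this, lintegral_zero, add_zero]
  have hsplitB : (∫⁻ r in Ioi (0:ℝ), volume (B r)) = ∫⁻ r in Ioo (0:ℝ) 1, volume (B r) := by
    rw [hsplit, lintegral_union measurableSet_Ici hdisj]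
    have : (∫⁻ r in Ici (1:ℝ), volume (B r)) = ∫⁻ r in Ici (1:ℝ), 0 := by
      apply setLIntegral_congr_fun measurableSet_Ici
      exact fun r hr => hBvanish r hr
    rw [this, lintegral_zero, add_zero]
  have hAanti : Antitone fun r : ℝ => volume (A r) := fun r1 r2 h12 =>
    measure_mono fun x hx => lt_of_le_of_lt (ENNReal.ofReal_le_ofReal h12) hx
  have hBanti : Antitone fun r : ℝ => volume (B r) := fun r1 r2 h12 =>
    measure_mono fun x hx => lt_of_le_of_lt (ENNReal.ofReal_le_ofReal h12) hx
  have lcf : (∫⁻ x, f' x) = ∫⁻ r in Ioo (0:ℝ) 1, volume (A r) :=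
    (layercake_ennreal volume hf').trans hsplitA
  have lcg : (∫⁻ x, g' x) = ∫⁻ r in Ioo (0:ℝ) 1, volume (B r) :=
    (layercake_ennreal volume hg').trans hsplitB
  have lch : (∫⁻ r in Ioi (0:ℝ), volume (C r)) = ∫⁻ x, h' x :=
    (layercake_ennreal volume hh').symm
  have main' : ENNReal.ofReal s * (∫⁻ x, f' x) + ENNReal.ofReal t * (∫⁻ x, g' x)
      ≤ ∫⁻ x, h' x := by
    rw [lcf, lcg, ← lch]
    calc ENNReal.ofReal s * (∫⁻ r in Ioo (0:ℝ) 1, volume (A r))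
          + ENNReal.ofReal t * ∫⁻ r in Ioo (0:ℝ) 1, volume (B r)
        = ∫⁻ r in Ioo (0:ℝ) 1,
            (ENNReal.ofReal s * volume (A r) + ENNReal.ofReal t * volume (B r)) := by
          rw [lintegral_add_left (hAanti.measurable.const_mul _),
            lintegral_const_mul _ hAanti.measurable, lintegral_const_mul _ hBanti.measurable]
      _ ≤ ∫⁻ r in Ioo (0:ℝ) 1, volume (C r) := by
          refine setLIntegral_mono hCmeas fun r hr => claim r hr.1 hr.2
      _ ≤ ∫⁻ r in Ioi (0:ℝ), volume (C r) :=
          lintegral_mono' (Measure.restrict_mono (fun r hr => hr.1) le_rfl) le_rfl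
  have geo : (∫⁻ x, f' x) ^ s * (∫⁻ x, g' x) ^ t ≤ ∫⁻ x, h' x :=
    le_trans (geom_ennreal hs.le ht.le hst) main'
  have e_f : (∫⁻ x, f' x) = (∫⁻ x, f x) * F⁻¹ := by
    simp only [hf'def, div_eq_mul_inv]
    exact lintegral_mul_const _ hf
  have e_g : (∫⁻ x, g' x) = (∫⁻ x, g x) * G⁻¹ := by
    simp only [hg'def, div_eq_mul_inv]
    exact lintegral_mul_const _ hg
  have e_h : (∫⁻ x, h' x) = (∫⁻ x, h x) * (F ^ s * G ^ t)⁻¹ := by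
    simp only [hh'def, div_eq_mul_inv]
    exact lintegral_mul_const _ hh
  have ef : (∫⁻ x, f' x) ^ s = (∫⁻ x, f x) ^ s * (F ^ s)⁻¹ := by
    rw [e_f, ENNReal.mul_rpow_of_nonneg _ _ hs.le, ENNReal.inv_rpow]
  have eg : (∫⁻ x, g' x) ^ t = (∫⁻ x, g x) ^ t * (G ^ t)⁻¹ := by
    rw [e_g, ENNReal.mul_rpow_of_nonneg _ _ ht.le, ENNReal.inv_rpow]
  have step : ((∫⁻ x, f x) ^ s * (F ^ s)⁻¹) * ((∫⁻ x, g x) ^ t * (G ^ t)⁻¹)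
      ≤ (∫⁻ x, h x) * (F ^ s * G ^ t)⁻¹ := by
    rw [← ef, ← eg, ← e_h]; exact geo
  have hc := ENNReal.inv_mul_cancel hFs0 hFstop
  have hd := ENNReal.inv_mul_cancel hGt0 hGttop
  calc (∫⁻ x, f x) ^ s * (∫⁻ x, g x) ^ t
      = (∫⁻ x, f x) ^ s * (∫⁻ x, g x) ^ t * (((F ^ s)⁻¹ * F ^ s) * ((G ^ t)⁻¹ * G ^ t)) := by
        rw [hc, hd, one_mul, mul_one]
    _ = ((∫⁻ x, f x) ^ s * (F ^ s)⁻¹) * ((∫⁻ x, g x) ^ t * (G ^ t)⁻¹) * (F ^ s * G ^ t) := by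
        ring
    _ ≤ (∫⁻ x, h x) * (F ^ s * G ^ t)⁻¹ * (F ^ s * G ^ t) := mul_le_mul' step le_rfl
    _ = (∫⁻ x, h x) * ((F ^ s * G ^ t)⁻¹ * (F ^ s * G ^ t)) := by rw [mul_assoc]
    _ = ∫⁻ x, h x := by
        rw [ENNReal.inv_mul_cancel (mul_ne_zero hFs0 hGt0) (ENNReal.mul_ne_top hFstop hGttop),
          mul_one]

def PLE {E : Type*} [AddCommGroup E] [Module ℝ E] [MeasurableSpace E]
    (μ : Measure E) (s t : ℝ) : Prop :=
  ∀ f g h : E → ℝ≥0∞, Measurable f → Measurable g → Measurable h →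
    (∀ x y, f x ^ s * g y ^ t ≤ h (s • x + t • y)) →
    (∫⁻ x, f x ∂μ) ^ s * (∫⁻ x, g x ∂μ) ^ t ≤ ∫⁻ x, h x ∂μ

lemma ple_real {s t : ℝ} (hs : 0 < s) (ht : 0 < t) (hst : s + t = 1) :
    PLE (volume : Measure ℝ) s t := by
  intro f g h hf hg hh hyp
  by_cases hf0 : ∀ x, f x = 0
  · have h1 : f = fun _ => 0 := funext hf0
    rw [h1, lintegral_zero, ENNReal.zero_rpow_of_pos hs, zero_mul]
    exact zero_le
  by_cases hg0 : ∀ x, g x = 0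
  · have h1 : g = fun _ => 0 := funext hg0
    rw [h1, lintegral_zero, ENNReal.zero_rpow_of_pos ht, mul_zero]
    exact zero_le
  push_neg at hf0 hg0
  obtain ⟨x₀, hx₀⟩ := hf0
  obtain ⟨y₀, hy₀⟩ := hg0
  set fn := fun (n : ℕ) (x : ℝ) => min (f x) ((n:ℝ≥0∞) + 1) with hfndef
  set gn := fun (n : ℕ) (x : ℝ) => min (g x) ((n:ℝ≥0∞) + 1) with hgndef
  have hfnm : ∀ n, Measurable (fn n) := fun n => hf.min measurable_const
  have hgnm : ∀ n, Measurable (gn n) := fun n => hg.min measurable_const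
  have hfnmono : Monotone fn := fun n m hnm x =>
    min_le_min le_rfl (add_le_add_left (Nat.cast_le.2 hnm) 1)
  have hgnmono : Monotone gn := fun n m hnm x =>
    min_le_min le_rfl (add_le_add_left (Nat.cast_le.2 hnm) 1)
  have trunc : ∀ n, (∫⁻ x, fn n x) ^ s * (∫⁻ x, gn n x) ^ t ≤ ∫⁻ x, h x := by
    intro n
    apply ple_real_core hs ht hst _ _ h (hfnm n) (hgnm n) hh
    · intro x y
      refine le_trans ?_ (hyp x y)
      exact mul_le_mul' (ENNReal.rpow_le_rpow (min_le_left _ _) hs.le)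
        (ENNReal.rpow_le_rpow (min_le_left _ _) ht.le)
    · have h1 : 0 < min (f x₀) ((n:ℝ≥0∞) + 1) :=
        lt_min (pos_iff_ne_zero.2 hx₀) (zero_lt_one.trans_le le_add_self)
      exact (lt_of_lt_of_le h1 (le_iSup (fn n) x₀)).ne'
    · exact ne_top_of_le_ne_top (by simp : ((n:ℝ≥0∞) + 1) ≠ ∞)
        (iSup_le fun x => min_le_right _ _)
    · have h1 : 0 < min (g y₀) ((n:ℝ≥0∞) + 1) :=
        lt_min (pos_iff_ne_zero.2 hy₀) (zero_lt_one.trans_le le_add_self)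
      exact (lt_of_lt_of_le h1 (le_iSup (gn n) y₀)).ne'
    · exact ne_top_of_le_ne_top (by simp : ((n:ℝ≥0∞) + 1) ≠ ∞)
        (iSup_le fun x => min_le_right _ _)
  have keyf : (⨆ n, ∫⁻ x, fn n x) = ∫⁻ x, f x := by
    rw [← lintegral_iSup hfnm hfnmono]
    exact lintegral_congr fun x => iSup_min_nat (f x)
  have keyg : (⨆ n, ∫⁻ x, gn n x) = ∫⁻ x, g x := by
    rw [← lintegral_iSup hgnm hgnmono]
    exact lintegral_congr fun x => iSup_min_nat (g x)
  have hmono1 : Monotone fun n => (∫⁻ x, fn n x) ^ s := fun n m hnm =>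
    ENNReal.rpow_le_rpow (lintegral_mono (hfnmono hnm)) hs.le
  have hmono2 : Monotone fun n => (∫⁻ x, gn n x) ^ t := fun n m hnm =>
    ENNReal.rpow_le_rpow (lintegral_mono (hgnmono hnm)) ht.le
  calc (∫⁻ x, f x) ^ s * (∫⁻ x, g x) ^ t
      = (⨆ n, ∫⁻ x, fn n x) ^ s * (⨆ n, ∫⁻ x, gn n x) ^ t := by rw [keyf, keyg]
    _ = (⨆ n, (∫⁻ x, fn n x) ^ s) * ⨆ n, (∫⁻ x, gn n x) ^ t := by
        rw [iSup_rpow_ennreal _ hs, iSup_rpow_ennreal _ ht]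
    _ = ⨆ n, (∫⁻ x, fn n x) ^ s * (∫⁻ x, gn n x) ^ t :=
        iSup_mul_iSup_monotone _ _ hmono1 hmono2
    _ ≤ ∫⁻ x, h x := iSup_le trunc

lemma ple_prod {α β : Type*} [MeasurableSpace α] [MeasurableSpace β]
    [AddCommGroup α] [Module ℝ α] [AddCommGroup β] [Module ℝ β]
    {μ : Measure α} {ν : Measure β} [SigmaFinite μ] [SigmaFinite ν]
    {s t : ℝ} (hμ : PLE μ s t) (hν : PLE ν s t) : PLE (μ.prod ν) s t := by
  intro f g h hf hg hh hyp
  set F := fun x₁ => ∫⁻ x₂, f (x₁, x₂) ∂ν with hFdef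
  set G := fun y₁ => ∫⁻ y₂, g (y₁, y₂) ∂ν with hGdef
  set H := fun z₁ => ∫⁻ z₂, h (z₁, z₂) ∂ν with hHdef
  have hFm : Measurable F := hf.lintegral_prod_right'
  have hGm : Measurable G := hg.lintegral_prod_right'
  have hHm : Measurable H := hh.lintegral_prod_right'
  have hsec : ∀ x₁ y₁, F x₁ ^ s * G y₁ ^ t ≤ H (s • x₁ + t • y₁) := by
    intro x₁ y₁
    apply hν (fun x₂ => f (x₁, x₂)) (fun y₂ => g (y₁, y₂)) (fun z₂ => h (s • x₁ + t • y₁, z₂))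
      (hf.comp measurable_prodMk_left) (hg.comp measurable_prodMk_left)
      (hh.comp measurable_prodMk_left)
    intro x₂ y₂
    have := hyp (x₁, x₂) (y₁, y₂)
    simpa [Prod.smul_mk, Prod.mk_add_mk] using this
  calc (∫⁻ z, f z ∂μ.prod ν) ^ s * (∫⁻ z, g z ∂μ.prod ν) ^ t
      = (∫⁻ x₁, F x₁ ∂μ) ^ s * (∫⁻ y₁, G y₁ ∂μ) ^ t := by
        rw [lintegral_prod _ hf.aemeasurable, lintegral_prod _ hg.aemeasurable]
    _ ≤ ∫⁻ z₁, H z₁ ∂μ := hμ F G H hFm hGm hHm hsec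
    _ = ∫⁻ z, h z ∂μ.prod ν := (lintegral_prod _ hh.aemeasurable).symm

lemma ple_map {E F' : Type*} [MeasurableSpace E] [MeasurableSpace F'] [AddCommGroup E]
    [Module ℝ E] [AddCommGroup F'] [Module ℝ F'] {μ : Measure E} {ν : Measure F'}
    {s t : ℝ} (e : E ≃ᵐ F') (hsmul : ∀ x y : E, e (s • x + t • y) = s • e x + t • e y)
    (hmp : MeasurePreserving e μ ν) (hPLE : PLE μ s t) : PLE ν s t := by
  intro f g h hf hg hh hyp
  have key := hPLE (f ∘ e) (g ∘ e) (h ∘ e) (hf.comp e.measurable) (hg.comp e.measurable)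
    (hh.comp e.measurable) ?_
  · simp only [Function.comp] at key
    rwa [hmp.lintegral_comp hf, hmp.lintegral_comp hg, hmp.lintegral_comp hh] at key
  · intro x y
    show f (e x) ^ s * g (e y) ^ t ≤ h (e (s • x + t • y))
    rw [hsmul]
    exact hyp (e x) (e y)

lemma ple_pi {s t : ℝ} (hs : 0 < s) (ht : 0 < t) (hst : s + t = 1) :
    ∀ d : ℕ, PLE (volume : Measure (Fin d → ℝ)) s t := by
  intro d
  induction d with
  | zero =>
    intro f g h hf hg hh hyp
    set z : Fin 0 → ℝ := fun i => i.elim0 with hzdef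
    have hv : (volume : Measure (Fin 0 → ℝ)) = Measure.dirac z := by
      rw [volume_pi]
      exact Measure.pi_of_empty _ _
    rw [hv, lintegral_dirac' _ hf, lintegral_dirac' _ hg, lintegral_dirac' _ hh]
    have key := hyp z z
    have he : s • z + t • z = z := Subsingleton.elim _ _
    rwa [he] at key
  | succ n ih =>
    have hmp : MeasurePreserving (MeasurableEquiv.piFinSuccAbove (fun _ : Fin (n+1) => ℝ) 0)
        volume ((volume : Measure ℝ).prod (volume : Measure (Fin n → ℝ))) := by
      have := measurePreserving_piFinSuccAbove (fun _ : Fin (n+1) => (volume : Measure ℝ)) 0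
      simpa [volume_pi] using this
    set e := MeasurableEquiv.piFinSuccAbove (fun _ : Fin (n+1) => ℝ) 0 with hedef
    have hlin : ∀ x y : Fin (n+1) → ℝ, e (s • x + t • y) = s • e x + t • e y := fun x y => rfl
    have hlinsymm : ∀ x y : ℝ × (Fin n → ℝ),
        e.symm (s • x + t • y) = s • e.symm x + t • e.symm y := by
      intro x y
      apply e.injective
      rw [e.apply_symm_apply, hlin, e.apply_symm_apply, e.apply_symm_apply]
    exact ple_map e.symm hlinsymm hmp.symm (ple_prod (ple_real hs ht hst) ih)

lemma ple_euclidean {d : ℕ} {s t : ℝ} (hs : 0 < s) (ht : 0 < t) (hst : s + t = 1) :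
    PLE (volume : Measure (EuclideanSpace ℝ (Fin d))) s t := by
  refine ple_map (MeasurableEquiv.toLp 2 (Fin d → ℝ)) (fun x y => rfl)
    (EuclideanSpace.volume_preserving_symm_measurableEquiv_toLp (Fin d)).symm (ple_pi hs ht hst d)

lemma exists_measurable_logconcave {d : ℕ} (θ : EuclideanSpace ℝ (Fin d) → ℝ)
    (hθ0 : ∀ x, 0 ≤ θ x) (hθlc : IsLogConcave θ) :
    ∃ θ' : EuclideanSpace ℝ (Fin d) → ℝ,
      Measurable θ' ∧ (∀ x, 0 ≤ θ' x) ∧ IsLogConcave θ' ∧ θ' =ᵐ[volume] θ := by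
  classical
  set C := {x : EuclideanSpace ℝ (Fin d) | 0 < θ x} with hCdef
  have hCconv : Convex ℝ C := by
    intro x hx y hy p q hp hq hpq
    have h1 := hθlc x y p q hp hq hpq
    have hpos : 0 < θ x ^ p * θ y ^ q :=
      mul_pos (Real.rpow_pos_of_pos hx _) (Real.rpow_pos_of_pos hy _)
    exact lt_of_lt_of_le hpos h1
  set U := interior C with hUdef
  have hUopen : IsOpen U := isOpen_interior
  have hUconv : Convex ℝ U := hCconv.interior
  have hUC : U ⊆ C := interior_subset
  have hconc : ConcaveOn ℝ C (fun x => Real.log (θ x)) := by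
    refine ⟨hCconv, ?_⟩
    intro x hx y hy p q hp hq hpq
    have h1 := hθlc x y p q hp hq hpq
    have hx' : (0:ℝ) < θ x := hx
    have hy' : (0:ℝ) < θ y := hy
    have h2 : 0 < θ x ^ p * θ y ^ q :=
      mul_pos (Real.rpow_pos_of_pos hx' _) (Real.rpow_pos_of_pos hy' _)
    calc p • Real.log (θ x) + q • Real.log (θ y)
        = Real.log (θ x ^ p * θ y ^ q) := by
          rw [Real.log_mul (Real.rpow_pos_of_pos hx' _).ne' (Real.rpow_pos_of_pos hy' _).ne',
            Real.log_rpow hx', Real.log_rpow hy', smul_eq_mul, smul_eq_mul]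
      _ ≤ Real.log (θ (p • x + q • y)) := Real.log_le_log h2 h1
  have hcont : ContinuousOn θ U := by
    have h1 : ContinuousOn (fun x => Real.log (θ x)) U := hconc.continuousOn_interior
    have h2 : ContinuousOn (fun x => Real.exp (Real.log (θ x))) U :=
      Real.continuous_exp.comp_continuousOn h1
    exact h2.congr fun x hx => (Real.exp_log (hUC hx)).symm
  refine ⟨fun x => if x ∈ U then θ x else 0, ?_, ?_, ?_, ?_⟩
  · apply measurable_of_isOpen
    intro V hV
    by_cases h0 : (0:ℝ) ∈ V
    · have heq : (fun x => if x ∈ U then θ x else 0) ⁻¹' V = (U ∩ θ ⁻¹' V) ∪ Uᶜ := by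
        ext x
        by_cases hx : x ∈ U <;> simp [hx, h0]
      rw [heq]
      exact ((hcont.isOpen_inter_preimage hUopen hV).measurableSet).union
        hUopen.measurableSet.compl
    · have heq : (fun x => if x ∈ U then θ x else 0) ⁻¹' V = U ∩ θ ⁻¹' V := by
        ext x
        by_cases hx : x ∈ U <;> simp [hx, h0]
      rw [heq]
      exact (hcont.isOpen_inter_preimage hUopen hV).measurableSet
  · intro x
    by_cases hx : x ∈ U <;> simp [hx, hθ0 x]
  · intro x y p q hp hq hpq
    rcases eq_or_lt_of_le hp with rfl | hp'
    · have : q = 1 := by linarith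
      subst this
      simp
    rcases eq_or_lt_of_le hq with rfl | hq'
    · have : p = 1 := by linarith
      subst this
      simp
    by_cases hx : x ∈ U
    · by_cases hy : y ∈ U
      · have hxy : p • x + q • y ∈ U := hUconv hx hy hp hq hpq
        simp only [if_pos hx, if_pos hy, if_pos hxy]
        exact hθlc x y p q hp hq hpq
      · simp only [if_neg hy, Real.zero_rpow hq'.ne', mul_zero]
        by_cases hxy : p • x + q • y ∈ U <;> simp [hxy, hθ0 _]
    · simp only [if_neg hx, Real.zero_rpow hp'.ne', zero_mul]
      by_cases hxy : p • x + q • y ∈ U <;> simp [hxy, hθ0 _]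
  · have hsub : {x | (if x ∈ U then θ x else 0) ≠ θ x} ⊆ frontier C := by
      intro x hx
      by_cases hxU : x ∈ U
      · simp [hxU] at hx
      · have hne : θ x ≠ 0 := fun h => hx (by simp [hxU, h])
        have hxC : x ∈ C := lt_of_le_of_ne (hθ0 x) (Ne.symm hne)
        exact ⟨subset_closure hxC, hxU⟩
    have hnull : volume {x | (if x ∈ U then θ x else 0) ≠ θ x} = 0 :=
      measure_mono_null hsub (hCconv.addHaar_frontier volume)
    rw [Filter.EventuallyEq, ae_iff]
    exact hnull

end PLEAux

/-- If `θ` is a nonnegative, log-concave, locally Lebesgue-integrable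
function on `ℝ^d`, then the measure `dρ = θ dx` satisfies the Prékopa–Leindler property. -/
theorem logConcave_density_prekopaLeindler {d : ℕ}
    (θ : EuclideanSpace ℝ (Fin d) → ℝ)
    (hθ0 : ∀ x, 0 ≤ θ x) (hθlc : IsLogConcave θ)
    (hθint : LocallyIntegrable θ volume) :
    PrekopaLeindler (volume.withDensity fun x => ENNReal.ofReal (θ x)) := by
  intro s t hs ht hst a b c hca hcb hcc hsa hsb hsc ha0 hb0 hc0 hyp
  set ρ := volume.withDensity fun x => ENNReal.ofReal (θ x) with hρdef
  haveI : IsFiniteMeasureOnCompacts ρ := by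
    constructor
    intro K hK
    rw [hρdef, withDensity_apply _ hK.measurableSet]
    have hint := (hθint.integrableOn_isCompact hK).2
    calc ∫⁻ x in K, ENNReal.ofReal (θ x) ∂volume
        ≤ ∫⁻ x in K, (‖θ x‖₊ : ℝ≥0∞) ∂volume :=
          lintegral_mono fun x => Real.ofReal_le_enorm (θ x)
      _ < ∞ := hint
  have hIa : Integrable a ρ := hca.integrable_of_hasCompactSupport hsa
  have hIb : Integrable b ρ := hcb.integrable_of_hasCompactSupport hsb
  have hIc : Integrable c ρ := hcc.integrable_of_hasCompactSupport hsc
  rcases eq_or_lt_of_le hs with rfl | hs'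
  · have ht1 : t = 1 := by linarith
    subst ht1
    rw [Real.rpow_zero, Real.rpow_one, one_mul]
    refine integral_mono hIc hIa fun y => ?_
    have := hyp y y
    simpa using this
  rcases eq_or_lt_of_le ht with rfl | ht'
  · have hs1 : s = 1 := by linarith
    subst hs1
    rw [Real.rpow_zero, Real.rpow_one, mul_one]
    refine integral_mono hIb hIa fun x => ?_
    have := hyp x x
    simpa using this
  obtain ⟨θ', hθ'meas, hθ'0, hθ'lc, hθ'ae⟩ := exists_measurable_logconcave θ hθ0 hθlc
  have hρ : ρ = volume.withDensity fun x => ENNReal.ofReal (θ' x) := by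
    rw [hρdef]
    exact (withDensity_congr_ae (hθ'ae.mono fun x hx => by rw [hx])).symm
  set f := fun x => ENNReal.ofReal (b x) * ENNReal.ofReal (θ' x) with hfdef
  set g := fun y => ENNReal.ofReal (c y) * ENNReal.ofReal (θ' y) with hgdef
  set h := fun z => ENNReal.ofReal (a z) * ENNReal.ofReal (θ' z) with hhdef
  have hfm : Measurable f := hcb.measurable.ennreal_ofReal.mul hθ'meas.ennreal_ofReal
  have hgm : Measurable g := hcc.measurable.ennreal_ofReal.mul hθ'meas.ennreal_ofReal
  have hhm : Measurable h := hca.measurable.ennreal_ofReal.mul hθ'meas.ennreal_ofReal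
  have hyp' : ∀ x y, f x ^ s * g y ^ t ≤ h (s • x + t • y) := by
    intro x y
    have e1 : f x ^ s = ENNReal.ofReal (b x ^ s) * ENNReal.ofReal (θ' x ^ s) := by
      rw [hfdef]
      simp only
      rw [ENNReal.mul_rpow_of_nonneg _ _ hs, ENNReal.ofReal_rpow_of_nonneg (hb0 x) hs,
        ENNReal.ofReal_rpow_of_nonneg (hθ'0 x) hs]
    have e2 : g y ^ t = ENNReal.ofReal (c y ^ t) * ENNReal.ofReal (θ' y ^ t) := by
      rw [hgdef]
      simp only
      rw [ENNReal.mul_rpow_of_nonneg _ _ ht, ENNReal.ofReal_rpow_of_nonneg (hc0 y) ht,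
        ENNReal.ofReal_rpow_of_nonneg (hθ'0 y) ht]
    calc f x ^ s * g y ^ t
        = (ENNReal.ofReal (b x ^ s) * ENNReal.ofReal (c y ^ t))
          * (ENNReal.ofReal (θ' x ^ s) * ENNReal.ofReal (θ' y ^ t)) := by
          rw [e1, e2]; ring
      _ = ENNReal.ofReal (b x ^ s * c y ^ t) * ENNReal.ofReal (θ' x ^ s * θ' y ^ t) := by
          rw [ENNReal.ofReal_mul (Real.rpow_nonneg (hb0 x) s),
            ENNReal.ofReal_mul (Real.rpow_nonneg (hθ'0 x) s)]
      _ ≤ ENNReal.ofReal (a (s • x + t • y)) * ENNReal.ofReal (θ' (s • x + t • y)) :=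
          mul_le_mul' (ENNReal.ofReal_le_ofReal (hyp x y))
            (ENNReal.ofReal_le_ofReal (hθ'lc x y s t hs ht hst))
  have key := ple_euclidean hs' ht' hst f g h hfm hgm hhm hyp'
  -- rewrite lintegrals with respect to ρ
  have ewd : ∀ (u : EuclideanSpace ℝ (Fin d) → ℝ), Continuous u →
      (∫⁻ x, ENNReal.ofReal (u x) * ENNReal.ofReal (θ' x) ∂volume)
        = ∫⁻ x, ENNReal.ofReal (u x) ∂ρ := by
    intro u hu
    rw [hρ, lintegral_withDensity_eq_lintegral_mul _ hθ'meas.ennreal_ofReal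
      hu.measurable.ennreal_ofReal]
    exact lintegral_congr fun x => mul_comm _ _
  have ef : (∫⁻ x, f x ∂volume) = ∫⁻ x, ENNReal.ofReal (b x) ∂ρ := ewd b hcb
  have eg : (∫⁻ x, g x ∂volume) = ∫⁻ x, ENNReal.ofReal (c x) ∂ρ := ewd c hcc
  have eh : (∫⁻ x, h x ∂volume) = ∫⁻ x, ENNReal.ofReal (a x) ∂ρ := ewd a hca
  rw [ef, eg, eh] at key
  have hfinb : (∫⁻ x, ENNReal.ofReal (b x) ∂ρ) ≠ ∞ :=
    ne_top_of_le_ne_top hIb.2.ne (lintegral_mono fun x => Real.ofReal_le_enorm (b x))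
  have hfinc : (∫⁻ x, ENNReal.ofReal (c x) ∂ρ) ≠ ∞ :=
    ne_top_of_le_ne_top hIc.2.ne (lintegral_mono fun x => Real.ofReal_le_enorm (c x))
  have hfina : (∫⁻ x, ENNReal.ofReal (a x) ∂ρ) ≠ ∞ :=
    ne_top_of_le_ne_top hIa.2.ne (lintegral_mono fun x => Real.ofReal_le_enorm (a x))
  have ia : ∫ x, a x ∂ρ = (∫⁻ x, ENNReal.ofReal (a x) ∂ρ).toReal :=
    integral_eq_lintegral_of_nonneg_ae (Filter.Eventually.of_forall ha0)
      hca.aestronglyMeasurable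
  have ib : ∫ x, b x ∂ρ = (∫⁻ x, ENNReal.ofReal (b x) ∂ρ).toReal :=
    integral_eq_lintegral_of_nonneg_ae (Filter.Eventually.of_forall hb0)
      hcb.aestronglyMeasurable
  have ic : ∫ x, c x ∂ρ = (∫⁻ x, ENNReal.ofReal (c x) ∂ρ).toReal :=
    integral_eq_lintegral_of_nonneg_ae (Filter.Eventually.of_forall hc0)
      hcc.aestronglyMeasurable
  rw [ia, ib, ic, ENNReal.toReal_rpow, ENNReal.toReal_rpow, ← ENNReal.toReal_mul]
  exact ENNReal.toReal_mono hfina key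
end
end

section
/- Let f : ℝ^d × ℝ^m → [0,∞) be a measurable log-concave function and define F : ℝ^d → [0,∞] by F(x) = ∫_{ℝ^m} f(x, ξ) dξ (Lebesgue integral, possibly infinite). Then F is log-concave, i.e. F(s·x + t·y) ≥ F(x)^s · F(y)^t in [0,∞] for all x, y ∈ ℝ^d and s, t ≥ 0 with s + t = 1. -/
open MeasureTheory Pointwise ENNReal

noncomputable section

section PLAux
open Set

/-- One-dimensional Brunn–Minkowski: superadditivity of Lebesgue measure under set addition. -/
lemma bm1 (A B : Set ℝ) (hA : MeasurableSet A) (hB : MeasurableSet B)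
    (hAne : A.Nonempty) (hBne : B.Nonempty) :
    volume A + volume B ≤ volume (A + B) := by
  have key : ∀ K L : Set ℝ, IsCompact K → IsCompact L → K ⊆ A → L ⊆ B →
      volume K + volume L ≤ volume (A + B) := by
    intro K L hK hL hKA hLB
    rcases K.eq_empty_or_nonempty with rfl | hKne
    · obtain ⟨a₀, ha₀⟩ := hAne
      simp only [measure_empty, zero_add]
      calc volume L = volume (a₀ +ᵥ L) := (measure_vadd _ _ _).symm
        _ ≤ volume (A + B) := by
            apply measure_mono
            rintro z ⟨l, hl, rfl⟩
            exact Set.add_mem_add ha₀ (hLB hl)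
            
    rcases L.eq_empty_or_nonempty with rfl | hLne
    · obtain ⟨b₀, hb₀⟩ := hBne
      simp only [measure_empty, add_zero]
      calc volume K = volume (b₀ +ᵥ K) := (measure_vadd _ _ _).symm
        _ ≤ volume (A + B) := by
            apply measure_mono
            rintro z ⟨k, hk, rfl⟩
            show b₀ + k ∈ A + B
            rw [show b₀ + k = k + b₀ from add_comm _ _]
            exact Set.add_mem_add (hKA hk) hb₀
    set k := sSup K with hk
    set l := sInf L with hl
    have hkK : k ∈ K := hK.sSup_mem hKne
    have hlL : l ∈ L := hL.sInf_mem hLne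
    set X := l +ᵥ K with hX
    set Y := k +ᵥ L with hY
    have hXY : X ∩ Y ⊆ {k + l} := by
      rintro z ⟨⟨x, hx, rfl⟩, ⟨y, hy, hyz⟩⟩
      have h1 : x ≤ k := le_csSup hK.bddAbove hx
      have h2 : l ≤ y := csInf_le hL.bddBelow hy
      have : k + y = l + x := hyz
      simp only [Set.mem_singleton_iff]
      have : x = k := le_antisymm h1 (by linarith)
      rw [vadd_eq_add, this, add_comm]
    have hXm : MeasurableSet X := (hK.vadd l).isClosed.measurableSet
    have hYm : MeasurableSet Y := (hL.vadd k).isClosed.measurableSet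
    have hsub : X ∪ Y ⊆ A + B := by
      rintro z (⟨x, hx, rfl⟩ | ⟨y, hy, rfl⟩)
      · show l + x ∈ A + B
        rw [show l + x = x + l from add_comm _ _]
        exact Set.add_mem_add (hKA hx) (hLB hlL)
      · exact Set.add_mem_add (hKA hkK) (hLB hy)
    calc volume K + volume L = volume X + volume Y := by rw [measure_vadd, measure_vadd]
      _ = volume (X \ {k + l}) + volume Y := by
          rw [measure_diff_null (measure_singleton _)]
      _ = volume ((X \ {k + l}) ∪ Y) := by
          rw [measure_union ?_ hYm]
          rw [Set.disjoint_left]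
          rintro z ⟨hzX, hz⟩ hzY
          exact hz (hXY ⟨hzX, hzY⟩)
      _ ≤ volume (X ∪ Y) := measure_mono (Set.union_subset_union_left _ Set.diff_subset)
      _ ≤ volume (A + B) := measure_mono hsub
  rw [hA.measure_eq_iSup_isCompact, hB.measure_eq_iSup_isCompact]
  simp only [iSup_and']
  refine ENNReal.biSup_add_biSup_le' ⟨∅, Set.empty_subset _, isCompact_empty⟩
    ⟨∅, Set.empty_subset _, isCompact_empty⟩ ?_
  rintro K ⟨hKA, hK⟩ L ⟨hLB, hL⟩
  exact key K L hK hL hKA hLB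

/-- Weighted AM–GM for two ENNReal numbers. -/
lemma amgm2 {s t : ℝ} (hs : 0 < s) (ht : 0 < t) (hst : s + t = 1) (z w : ℝ≥0∞) :
    z ^ s * w ^ t ≤ ENNReal.ofReal s * z + ENNReal.ofReal t * w := by
  rcases eq_or_ne z 0 with rfl | hz0
  · rw [ENNReal.zero_rpow_of_pos hs, zero_mul]; exact zero_le
  rcases eq_or_ne w 0 with rfl | hw0
  · rw [ENNReal.zero_rpow_of_pos ht, mul_zero]; exact zero_le
  rcases eq_or_ne z ⊤ with rfl | hztop
  · have : ENNReal.ofReal s * ⊤ = ⊤ := by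
      rw [ENNReal.mul_top (by simp [ENNReal.ofReal_eq_zero]; linarith)]
    rw [this]; exact le_top.trans_eq (by simp)
  rcases eq_or_ne w ⊤ with rfl | hwtop
  · have : ENNReal.ofReal t * ⊤ = ⊤ := by
      rw [ENNReal.mul_top (by simp [ENNReal.ofReal_eq_zero]; linarith)]
    rw [this]; simp
  -- finite positive case
  have h1 : z ^ s * w ^ t = ENNReal.ofReal (z.toReal ^ s * w.toReal ^ t) := by
    rw [ENNReal.ofReal_mul (Real.rpow_nonneg ENNReal.toReal_nonneg _),
      ← ENNReal.ofReal_rpow_of_nonneg ENNReal.toReal_nonneg hs.le,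
      ← ENNReal.ofReal_rpow_of_nonneg ENNReal.toReal_nonneg ht.le,
      ENNReal.ofReal_toReal hztop, ENNReal.ofReal_toReal hwtop]
  have h2 : ENNReal.ofReal s * z + ENNReal.ofReal t * w
      = ENNReal.ofReal (s * z.toReal + t * w.toReal) := by
    rw [ENNReal.ofReal_add (by positivity) (by positivity),
      ENNReal.ofReal_mul hs.le, ENNReal.ofReal_mul ht.le,
      ENNReal.ofReal_toReal hztop, ENNReal.ofReal_toReal hwtop]
  rw [h1, h2]
  exact ENNReal.ofReal_le_ofReal
    (Real.geom_mean_le_arith_mean2_weighted hs.le ht.le ENNReal.toReal_nonneg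
      ENNReal.toReal_nonneg hst)

/-- rpow commutes with iSup over a nonempty index for nonneg exponents. -/
lemma rpow_iSupX {ι : Type*} [Nonempty ι] (u : ι → ℝ≥0∞) {s : ℝ} (hs : 0 ≤ s) :
    (⨆ i, u i) ^ s = ⨆ i, u i ^ s := by
  rcases hs.eq_or_lt with rfl | hs'
  · simp [ENNReal.rpow_zero]
  refine le_antisymm ?_ (iSup_le fun i => ENNReal.rpow_le_rpow (le_iSup u i) hs)
  have key : ∀ i, u i ≤ (⨆ j, u j ^ s) ^ (1 / s) := by
    intro i
    have := ENNReal.rpow_le_rpow (le_iSup (fun j => u j ^ s) i) (by positivity : (0:ℝ) ≤ 1/s)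
    rwa [← ENNReal.rpow_mul, mul_one_div, div_self hs'.ne', ENNReal.rpow_one] at this
  have := ENNReal.rpow_le_rpow (iSup_le key) hs
  rwa [← ENNReal.rpow_mul, one_div_mul_cancel hs'.ne', ENNReal.rpow_one] at this

lemma iSup_mul_iSup_mono {f g : ℕ → ℝ≥0∞} (hf : Monotone f) (hg : Monotone g) :
    (⨆ n, f n) * (⨆ n, g n) = ⨆ n, f n * g n := by
  refine le_antisymm ?_ (iSup_le fun n => mul_le_mul' (le_iSup f n) (le_iSup g n))
  rw [ENNReal.iSup_mul]
  refine iSup_le fun i => ?_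
  rw [ENNReal.mul_iSup]
  refine iSup_le fun j => ?_
  calc f i * g j ≤ f (max i j) * g (max i j) :=
        mul_le_mul' (hf (le_max_left _ _)) (hg (le_max_right _ _))
    _ ≤ ⨆ n, f n * g n := le_iSup (fun n => f n * g n) (max i j)

lemma iSup_min_natCast (x : ℝ≥0∞) : ⨆ n : ℕ, min x ((n : ℝ≥0∞) + 1) = x := by
  refine le_antisymm (iSup_le fun n => min_le_left _ _) ?_
  rcases eq_or_ne x ⊤ with rfl | hx
  · have : ∀ n : ℕ, min (⊤ : ℝ≥0∞) ((n : ℝ≥0∞) + 1) = (n : ℝ≥0∞) + 1 := fun n =>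
      min_eq_right le_top
    simp only [this]
    calc (⊤ : ℝ≥0∞) = ⨆ n : ℕ, (n : ℝ≥0∞) := ENNReal.iSup_natCast.symm
      _ ≤ ⨆ n : ℕ, (n : ℝ≥0∞) + 1 := iSup_mono fun n => le_self_add
  · obtain ⟨n, hn⟩ := ENNReal.exists_nat_gt hx
    refine le_trans ?_ (le_iSup _ n)
    rw [min_eq_left (hn.le.trans (by simp))]

/-- Core normalized Prékopa–Leindler in dimension 1 (all functions bounded by 1). -/
lemma PL1_norm (b c a : ℝ → ℝ≥0∞) (hb : Measurable b) (hc : Measurable c) (ha : Measurable a)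
    (hb1 : ∀ x, b x ≤ 1) (hc1 : ∀ x, c x ≤ 1) (ha1 : ∀ x, a x ≤ 1)
    (hbne : ∀ u : ℝ, 0 < u → u < 1 → ∃ x, ENNReal.ofReal u < b x)
    (hcne : ∀ u : ℝ, 0 < u → u < 1 → ∃ x, ENNReal.ofReal u < c x)
    {s t : ℝ} (hs : 0 < s) (ht : 0 < t) (hst : s + t = 1)
    (hyp : ∀ x y : ℝ, b x ^ s * c y ^ t ≤ a (s * x + t * y)) :
    (ENNReal.ofReal s * ∫⁻ x, b x) + ENNReal.ofReal t * ∫⁻ x, c x ≤ ∫⁻ x, a x := by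
  -- layer cake representations
  have layer : ∀ g : ℝ → ℝ≥0∞, Measurable g → (∀ x, g x ≤ 1) →
      ∫⁻ x, g x = ∫⁻ u in Ioi (0:ℝ), volume {x | ENNReal.ofReal u < g x} := by
    intro g hg hg1
    have hfin : ∀ x, g x ≠ ⊤ := fun x => ((hg1 x).trans_lt (by simp)).ne
    have h1 : ∀ x, ENNReal.ofReal ((g x).toReal) = g x := fun x => ENNReal.ofReal_toReal (hfin x)
    calc ∫⁻ x, g x = ∫⁻ x, ENNReal.ofReal ((g x).toReal) := by simp_rw [h1]
      _ = ∫⁻ u in Ioi (0:ℝ), volume {x | u < (g x).toReal} :=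
          lintegral_eq_lintegral_meas_lt volume (ae_of_all _ fun x => ENNReal.toReal_nonneg)
            hg.ennreal_toReal.aemeasurable
      _ = ∫⁻ u in Ioi (0:ℝ), volume {x | ENNReal.ofReal u < g x} := by
          refine setLIntegral_congr_fun measurableSet_Ioi (fun u hu => ?_)
          congr 1
          ext x
          simp only [Set.mem_setOf_eq]
          rw [ENNReal.ofReal_lt_iff_lt_toReal (le_of_lt hu) (hfin x)]
  -- for u ≥ 1 the superlevel sets are empty
  have empty : ∀ (g : ℝ → ℝ≥0∞), (∀ x, g x ≤ 1) → ∀ u : ℝ, 1 ≤ u →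
      {x | ENNReal.ofReal u < g x} = ∅ := by
    intro g hg1 u hu
    ext x
    simp only [Set.mem_setOf_eq, Set.mem_empty_iff_false, iff_false, not_lt]
    exact (hg1 x).trans (by simpa using ENNReal.ofReal_le_ofReal hu)
  -- restrict layer cake to Ioo 0 1
  have layer' : ∀ g : ℝ → ℝ≥0∞, Measurable g → (∀ x, g x ≤ 1) →
      ∫⁻ x, g x = ∫⁻ u in Ioo (0:ℝ) 1, volume {x | ENNReal.ofReal u < g x} := by
    intro g hg hg1
    rw [layer g hg hg1, ← Set.Ioo_union_Ici_eq_Ioi (zero_lt_one : (0:ℝ) < 1),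
      lintegral_union measurableSet_Ici (by
        rw [Set.disjoint_left]
        rintro u ⟨-, h1⟩ h2
        exact absurd (Set.mem_Ici.mp h2) (not_le.mpr h1))]
    have : ∫⁻ u in Ici (1:ℝ), volume {x | ENNReal.ofReal u < g x} = 0 := by
      rw [← lintegral_zero (μ := volume.restrict (Ici (1:ℝ)))]
      refine setLIntegral_congr_fun measurableSet_Ici (fun u hu => ?_)
      rw [empty g hg1 u hu]
      simp
    rw [this, add_zero]
  rw [layer' b hb hb1, layer' c hc hc1, layer a ha ha1]
  -- pointwise superlevel inequality on Ioo 0 1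
  have key : ∀ u ∈ Ioo (0:ℝ) 1,
      ENNReal.ofReal s * volume {x | ENNReal.ofReal u < b x}
        + ENNReal.ofReal t * volume {x | ENNReal.ofReal u < c x}
      ≤ volume {x | ENNReal.ofReal u < a x} := by
    rintro u ⟨hu0, hu1⟩
    set B := {x | ENNReal.ofReal u < b x}
    set C := {x | ENNReal.ofReal u < c x}
    set A := {x | ENNReal.ofReal u < a x}
    have hBm : MeasurableSet B := hb measurableSet_Ioi
    have hCm : MeasurableSet C := hc measurableSet_Ioi
    have hBne' : B.Nonempty := hbne u hu0 hu1
    have hCne' : C.Nonempty := hcne u hu0 hu1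
    have incl : s • B + t • C ⊆ A := by
      rintro z ⟨-, ⟨x, hx, rfl⟩, -, ⟨y, hy, rfl⟩, rfl⟩
      show ENNReal.ofReal u < a (s • x + t • y)
      have hub : ENNReal.ofReal u ≠ ⊤ := ENNReal.ofReal_ne_top
      have h1 : ENNReal.ofReal u ^ s < b x ^ s := ENNReal.rpow_lt_rpow hx hs
      have h2 : ENNReal.ofReal u ^ t < c y ^ t := ENNReal.rpow_lt_rpow hy ht
      have h3 : ENNReal.ofReal u ^ s * ENNReal.ofReal u ^ t < b x ^ s * c y ^ t :=
        ENNReal.mul_lt_mul h1 h2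
      have h4 : ENNReal.ofReal u ^ s * ENNReal.ofReal u ^ t = ENNReal.ofReal u := by
        rw [← ENNReal.rpow_add s t (by simpa using hu0) hub, hst, ENNReal.rpow_one]
      calc ENNReal.ofReal u = ENNReal.ofReal u ^ s * ENNReal.ofReal u ^ t := h4.symm
        _ < b x ^ s * c y ^ t := h3
        _ ≤ a (s * x + t * y) := hyp x y
        _ = a (s • x + t • y) := by norm_num
    have smulB : volume (s • B) = ENNReal.ofReal s * volume B := by
      rw [Measure.addHaar_smul_of_nonneg volume hs.le B]
      simp
    have smulC : volume (t • C) = ENNReal.ofReal t * volume C := by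
      rw [Measure.addHaar_smul_of_nonneg volume ht.le C]
      simp
    calc ENNReal.ofReal s * volume B + ENNReal.ofReal t * volume C
        = volume (s • B) + volume (t • C) := by rw [smulB, smulC]
      _ ≤ volume (s • B + t • C) :=
          bm1 _ _ (hBm.const_smul₀ s) (hCm.const_smul₀ t)
            (hBne'.smul_set) (hCne'.smul_set)
      _ ≤ volume A := measure_mono incl
  calc (ENNReal.ofReal s * ∫⁻ u in Ioo (0:ℝ) 1, volume {x | ENNReal.ofReal u < b x})
        + ENNReal.ofReal t * ∫⁻ u in Ioo (0:ℝ) 1, volume {x | ENNReal.ofReal u < c x}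
      = (∫⁻ u in Ioo (0:ℝ) 1, ENNReal.ofReal s * volume {x | ENNReal.ofReal u < b x})
        + ∫⁻ u in Ioo (0:ℝ) 1, ENNReal.ofReal t * volume {x | ENNReal.ofReal u < c x} := by
        rw [lintegral_const_mul' _ _ ENNReal.ofReal_ne_top,
          lintegral_const_mul' _ _ ENNReal.ofReal_ne_top]
    _ ≤ ∫⁻ u in Ioo (0:ℝ) 1, (ENNReal.ofReal s * volume {x | ENNReal.ofReal u < b x}
        + ENNReal.ofReal t * volume {x | ENNReal.ofReal u < c x}) := le_lintegral_add _ _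
    _ ≤ ∫⁻ u in Ioo (0:ℝ) 1, volume {x | ENNReal.ofReal u < a x} := by
        refine lintegral_mono_ae ?_
        rw [ae_restrict_iff' measurableSet_Ioo]
        exact ae_of_all _ key
    _ ≤ ∫⁻ u in Ioi (0:ℝ), volume {x | ENNReal.ofReal u < a x} :=
        lintegral_mono_set Set.Ioo_subset_Ioi_self

/-- Prékopa–Leindler in dimension 1, bounded case. -/
lemma PL1_bdd (b c a : ℝ → ℝ≥0∞) (hb : Measurable b) (hc : Measurable c) (ha : Measurable a)
    {N : ℝ≥0∞} (hN0 : N ≠ 0) (hNt : N ≠ ⊤) (hbN : ∀ x, b x ≤ N) (hcN : ∀ x, c x ≤ N)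
    {s t : ℝ} (hs : 0 < s) (ht : 0 < t) (hst : s + t = 1)
    (hyp : ∀ x y : ℝ, b x ^ s * c y ^ t ≤ a (s * x + t * y)) :
    (∫⁻ x, b x) ^ s * (∫⁻ x, c x) ^ t ≤ ∫⁻ x, a x := by
  rcases eq_or_ne (∫⁻ x, b x) 0 with hIb | hIb
  · rw [hIb, ENNReal.zero_rpow_of_pos hs, zero_mul]; exact zero_le
  rcases eq_or_ne (∫⁻ x, c x) 0 with hIc | hIc
  · rw [hIc, ENNReal.zero_rpow_of_pos ht, mul_zero]; exact zero_le
  set SB := ⨆ x, b x with hSB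
  set SC := ⨆ x, c x with hSC
  have hSB0 : SB ≠ 0 := by
    intro h
    apply hIb
    have : ∀ x, b x = 0 := fun x => le_antisymm (h ▸ le_iSup b x) zero_le
    simp [this]
  have hSC0 : SC ≠ 0 := by
    intro h
    apply hIc
    have : ∀ x, c x = 0 := fun x => le_antisymm (h ▸ le_iSup c x) zero_le
    simp [this]
  have hSBt : SB ≠ ⊤ := ((iSup_le hbN).trans_lt hNt.lt_top).ne
  have hSCt : SC ≠ ⊤ := ((iSup_le hcN).trans_lt hNt.lt_top).ne
  set D := SB ^ s * SC ^ t with hD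
  have hSBs0 : SB ^ s ≠ 0 := (ENNReal.rpow_pos (hSB0.bot_lt) hSBt).ne'
  have hSCt0 : SC ^ t ≠ 0 := (ENNReal.rpow_pos (hSC0.bot_lt) hSCt).ne'
  have hSBst : SB ^ s ≠ ⊤ := ENNReal.rpow_ne_top_of_nonneg hs.le hSBt
  have hSCtt : SC ^ t ≠ ⊤ := ENNReal.rpow_ne_top_of_nonneg ht.le hSCt
  have hD0 : D ≠ 0 := mul_ne_zero hSBs0 hSCt0
  have hDt : D ≠ ⊤ := ENNReal.mul_ne_top hSBst hSCtt
  have hDinv : D⁻¹ = (SB ^ s)⁻¹ * (SC ^ t)⁻¹ := ENNReal.mul_inv (Or.inl hSBs0) (Or.inl hSBst)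
  set b' := fun x => b x * SB⁻¹ with hb'
  set c' := fun x => c x * SC⁻¹ with hc'
  set a' := fun x => min (a x * D⁻¹) 1 with ha'
  have hb'm : Measurable b' := hb.mul_const _
  have hc'm : Measurable c' := hc.mul_const _
  have ha'm : Measurable a' := (ha.mul_const _).min measurable_const
  have hb'1 : ∀ x, b' x ≤ 1 := fun x => by
    calc b x * SB⁻¹ ≤ SB * SB⁻¹ := mul_le_mul_left (le_iSup b x) _
      _ = 1 := ENNReal.mul_inv_cancel hSB0 hSBt
  have hc'1 : ∀ x, c' x ≤ 1 := fun x => by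
    calc c x * SC⁻¹ ≤ SC * SC⁻¹ := mul_le_mul_left (le_iSup c x) _
      _ = 1 := ENNReal.mul_inv_cancel hSC0 hSCt
  have ha'1 : ∀ x, a' x ≤ 1 := fun x => min_le_right _ _
  have rearr : ∀ (f g : ℝ≥0∞), (f * SB⁻¹) ^ s * (g * SC⁻¹) ^ t = f ^ s * g ^ t * D⁻¹ := by
    intro f g
    rw [ENNReal.mul_rpow_of_nonneg _ _ hs.le, ENNReal.mul_rpow_of_nonneg _ _ ht.le,
      ENNReal.inv_rpow, ENNReal.inv_rpow, hDinv]
    ring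
  have nonempty : ∀ (g : ℝ → ℝ≥0∞) (SG : ℝ≥0∞), SG = ⨆ x, g x → SG ≠ 0 → SG ≠ ⊤ →
      ∀ u : ℝ, 0 < u → u < 1 → ∃ x, ENNReal.ofReal u < g x * SG⁻¹ := by
    intro g SG hSG hSG0 hSGt u hu0 hu1
    have h1 : ENNReal.ofReal u * SG < 1 * SG := by
      rw [ENNReal.mul_lt_mul_iff_left hSG0 hSGt]
      exact ENNReal.ofReal_lt_one.mpr hu1
    rw [one_mul, hSG] at h1
    obtain ⟨x, hx⟩ := lt_iSup_iff.mp h1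
    refine ⟨x, ?_⟩
    have h2 : (ENNReal.ofReal u * SG) * SG⁻¹ < g x * SG⁻¹ := by
      rw [ENNReal.mul_lt_mul_iff_left (ENNReal.inv_ne_zero.mpr hSGt) (ENNReal.inv_ne_top.mpr hSG0)]
      exact hSG ▸ hx
    rwa [mul_assoc, ENNReal.mul_inv_cancel hSG0 hSGt, mul_one] at h2
  have hyp' : ∀ x y : ℝ, b' x ^ s * c' y ^ t ≤ a' (s * x + t * y) := by
    intro x y
    rw [hb', hc', rearr]
    refine le_min ?_ ?_
    · exact mul_le_mul_left (hyp x y) _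
    · calc b x ^ s * c y ^ t * D⁻¹ ≤ SB ^ s * SC ^ t * D⁻¹ :=
            mul_le_mul_left (mul_le_mul' (ENNReal.rpow_le_rpow (le_iSup b x) hs.le)
              (ENNReal.rpow_le_rpow (le_iSup c y) ht.le)) _
        _ = 1 := ENNReal.mul_inv_cancel hD0 hDt
  have main := PL1_norm b' c' a' hb'm hc'm ha'm hb'1 hc'1 ha'1
    (nonempty b SB hSB hSB0 hSBt) (nonempty c SC hSC hSC0 hSCt) hs ht hst hyp'
  have Ib' : ∫⁻ x, b' x = (∫⁻ x, b x) * SB⁻¹ := lintegral_mul_const' _ _ (ENNReal.inv_ne_top.mpr hSB0)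
  have Ic' : ∫⁻ x, c' x = (∫⁻ x, c x) * SC⁻¹ := lintegral_mul_const' _ _ (ENNReal.inv_ne_top.mpr hSC0)
  have Ia' : ∫⁻ x, a' x ≤ (∫⁻ x, a x) * D⁻¹ := by
    rw [← lintegral_mul_const' _ _ (ENNReal.inv_ne_top.mpr hD0)]
    exact lintegral_mono fun x => min_le_left _ _
  have chain : ((∫⁻ x, b x) ^ s * (∫⁻ x, c x) ^ t) * D⁻¹ ≤ (∫⁻ x, a x) * D⁻¹ := by
    calc ((∫⁻ x, b x) ^ s * (∫⁻ x, c x) ^ t) * D⁻¹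
        = ((∫⁻ x, b x) * SB⁻¹) ^ s * ((∫⁻ x, c x) * SC⁻¹) ^ t := (rearr _ _).symm
      _ = (∫⁻ x, b' x) ^ s * (∫⁻ x, c' x) ^ t := by rw [Ib', Ic']
      _ ≤ ENNReal.ofReal s * (∫⁻ x, b' x) + ENNReal.ofReal t * (∫⁻ x, c' x) :=
          amgm2 hs ht hst _ _
      _ ≤ ∫⁻ x, a' x := main
      _ ≤ (∫⁻ x, a x) * D⁻¹ := Ia'
  rwa [ENNReal.mul_le_mul_iff_left (ENNReal.inv_ne_zero.mpr hDt) (ENNReal.inv_ne_top.mpr hD0)]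
    at chain

/-- Prékopa–Leindler in dimension 1. -/
lemma PL1 (b c a : ℝ → ℝ≥0∞) (hb : Measurable b) (hc : Measurable c) (ha : Measurable a)
    {s t : ℝ} (hs : 0 ≤ s) (ht : 0 ≤ t) (hst : s + t = 1)
    (hyp : ∀ x y : ℝ, b x ^ s * c y ^ t ≤ a (s * x + t * y)) :
    (∫⁻ x, b x) ^ s * (∫⁻ x, c x) ^ t ≤ ∫⁻ x, a x := by
  rcases hs.eq_or_lt with rfl | hs'
  · have ht1 : t = 1 := by linarith
    subst ht1
    simp only [ENNReal.rpow_zero, one_mul, ENNReal.rpow_one]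
    refine lintegral_mono fun y => ?_
    have := hyp y y
    simpa using this
  rcases ht.eq_or_lt with rfl | ht'
  · have hs1 : s = 1 := by linarith
    subst hs1
    simp only [ENNReal.rpow_zero, mul_one, ENNReal.rpow_one]
    refine lintegral_mono fun x => ?_
    have := hyp x x
    simpa using this
  set bn := fun (n : ℕ) (x : ℝ) => min (b x) ((n : ℝ≥0∞) + 1) with hbn
  set cn := fun (n : ℕ) (x : ℝ) => min (c x) ((n : ℝ≥0∞) + 1) with hcn
  have hbnm : ∀ n, Measurable (bn n) := fun n => hb.min measurable_const
  have hcnm : ∀ n, Measurable (cn n) := fun n => hc.min measurable_const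
  have step : ∀ n : ℕ, (∫⁻ x, bn n x) ^ s * (∫⁻ x, cn n x) ^ t ≤ ∫⁻ x, a x := by
    intro n
    refine PL1_bdd (bn n) (cn n) a (hbnm n) (hcnm n) ha
      (N := (n : ℝ≥0∞) + 1) (by simp) (by simp) (fun x => min_le_right _ _)
      (fun x => min_le_right _ _) hs' ht' hst ?_
    intro x y
    calc bn n x ^ s * cn n y ^ t ≤ b x ^ s * c y ^ t :=
        mul_le_mul' (ENNReal.rpow_le_rpow (min_le_left _ _) hs)
          (ENNReal.rpow_le_rpow (min_le_left _ _) ht)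
      _ ≤ a (s * x + t * y) := hyp x y
  have hmono : ∀ (g : ℝ → ℝ≥0∞), Monotone fun (n : ℕ) => fun x => min (g x) ((n : ℝ≥0∞) + 1) := by
    intro g n m hnm x
    exact min_le_min le_rfl (add_le_add_left (by exact_mod_cast Nat.cast_le.mpr hnm) 1)
  have Ib : ∫⁻ x, b x = ⨆ n, ∫⁻ x, bn n x := by
    rw [← lintegral_iSup hbnm (fun n m h => fun x => hmono b h x)]
    congr 1
    ext x
    exact (iSup_min_natCast (b x)).symm
  have Ic : ∫⁻ x, c x = ⨆ n, ∫⁻ x, cn n x := by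
    rw [← lintegral_iSup hcnm (fun n m h => fun x => hmono c h x)]
    congr 1
    ext x
    exact (iSup_min_natCast (c x)).symm
  have hIbmono : Monotone fun n => ∫⁻ x, bn n x := fun n m h =>
    lintegral_mono fun x => hmono b h x
  have hIcmono : Monotone fun n => ∫⁻ x, cn n x := fun n m h =>
    lintegral_mono fun x => hmono c h x
  rw [Ib, Ic, rpow_iSupX _ hs, rpow_iSupX _ ht,
    iSup_mul_iSup_mono (fun n m h => ENNReal.rpow_le_rpow (hIbmono h) hs)
      (fun n m h => ENNReal.rpow_le_rpow (hIcmono h) ht)]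
  exact iSup_le step

/-- Integrating out one real variable preserves log-concavity (ENNReal version). -/
lemma one_dim {E : Type*} [AddCommGroup E] [Module ℝ E] (g : E × ℝ → ℝ≥0∞)
    (hg : ∀ x : E, Measurable fun τ => g (x, τ))
    (hlc : ∀ p q : E × ℝ, ∀ s t : ℝ, 0 ≤ s → 0 ≤ t → s + t = 1 →
      g p ^ s * g q ^ t ≤ g (s • p + t • q))
    (x y : E) (s t : ℝ) (hs : 0 ≤ s) (ht : 0 ≤ t) (hst : s + t = 1) :
    (∫⁻ τ, g (x, τ)) ^ s * (∫⁻ τ, g (y, τ)) ^ t ≤ ∫⁻ τ, g (s • x + t • y, τ) := by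
  refine PL1 _ _ _ (hg x) (hg y) (hg _) hs ht hst fun ξ τ => ?_
  have := hlc (x, ξ) (y, τ) s t hs ht hst
  simpa [Prod.smul_mk, Prod.mk_add_mk, smul_eq_mul] using this

/-- Marginals over `ℝ^m` of measurable ENNReal log-concave functions are log-concave. -/
lemma marg_pi : ∀ (m : ℕ) {E : Type} [MeasurableSpace E] [AddCommGroup E] [Module ℝ E]
    (g : E × (Fin m → ℝ) → ℝ≥0∞), Measurable g →
    (∀ p q : E × (Fin m → ℝ), ∀ s t : ℝ, 0 ≤ s → 0 ≤ t → s + t = 1 →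
      g p ^ s * g q ^ t ≤ g (s • p + t • q)) →
    ∀ x y : E, ∀ s t : ℝ, 0 ≤ s → 0 ≤ t → s + t = 1 →
      (∫⁻ ξ, g (x, ξ)) ^ s * (∫⁻ ξ, g (y, ξ)) ^ t ≤ ∫⁻ ξ, g (s • x + t • y, ξ) := by
  intro m
  induction m with
  | zero =>
    intro E _ _ _ g hg hlc x y s t hs ht hst
    have huniv : (volume : Measure (Fin 0 → ℝ)) Set.univ = 1 := by
      simp [MeasureTheory.volume_pi, Measure.pi_univ]
    simp only [lintegral_unique, huniv, mul_one]
    have key := hlc (x, default) (y, default) s t hs ht hst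
    have h2 : s • ((x, default) : E × (Fin 0 → ℝ)) + t • (y, default)
        = ((s • x + t • y, default) : E × (Fin 0 → ℝ)) :=
      Prod.ext rfl (Subsingleton.elim _ _)
    rw [h2] at key
    simp only [show (@default (Fin 0 → ℝ) Pi.instInhabited)
      = (@default (Fin 0 → ℝ) Unique.instInhabited) from Subsingleton.elim _ _] at key ⊢
    exact key
  | succ m IH =>
    intro E _ _ _ g hg hlc x y s t hs ht hst
    set e := MeasurableEquiv.piFinSuccAbove (fun _ : Fin (m + 1) => ℝ) 0 with he
    have elin : ∀ (u v : Fin (m + 1) → ℝ) (a b : ℝ), e (a • u + b • v) = a • e u + b • e v := by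
      intro u v a b
      simp only [he, MeasurableEquiv.piFinSuccAbove_apply]
      rfl
    have esymmlin : ∀ (p q : ℝ × (Fin m → ℝ)) (a b : ℝ),
        e.symm (a • p + b • q) = a • e.symm p + b • e.symm q := by
      intro p q a b
      apply e.injective
      rw [e.apply_symm_apply, elin, e.apply_symm_apply, e.apply_symm_apply]
    have mp : MeasurePreserving e volume volume :=
      volume_preserving_piFinSuccAbove (fun _ : Fin (m + 1) => ℝ) 0
    -- H integrates out the ℝ coordinate
    set H : E × (Fin m → ℝ) → ℝ≥0∞ := fun p => ∫⁻ τ : ℝ, g (p.1, e.symm (τ, p.2)) with hH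
    have hgm' : Measurable fun q : (E × (Fin m → ℝ)) × ℝ => g (q.1.1, e.symm (q.2, q.1.2)) := by
      apply hg.comp
      exact (measurable_fst.comp measurable_fst).prodMk
        (e.symm.measurable.comp ((measurable_snd).prodMk
          (measurable_snd.comp measurable_fst)))
    have hHm : Measurable H := by
      apply Measurable.lintegral_prod_right' (f := fun q : (E × (Fin m → ℝ)) × ℝ =>
        g (q.1.1, e.symm (q.2, q.1.2)))
      exact hgm'
    have hHlc : ∀ p q : E × (Fin m → ℝ), ∀ a b : ℝ, 0 ≤ a → 0 ≤ b → a + b = 1 →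
        H p ^ a * H q ^ b ≤ H (a • p + b • q) := by
      intro p q a b ha hb hab
      have := one_dim (E := E × (Fin m → ℝ))
        (fun w : (E × (Fin m → ℝ)) × ℝ => g (w.1.1, e.symm (w.2, w.1.2)))
        (fun w => hgm'.comp (measurable_const.prodMk measurable_id))
        ?_ p q a b ha hb hab
      · exact this
      · rintro ⟨⟨px, pξ⟩, pτ⟩ ⟨⟨qx, qξ⟩, qτ⟩ a b ha hb hab
        have key := hlc (px, e.symm (pτ, pξ)) (qx, e.symm (qτ, qξ)) a b ha hb hab
        have h2 : e.symm (a * pτ + b * qτ, a • pξ + b • qξ)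
            = a • e.symm (pτ, pξ) + b • e.symm (qτ, qξ) := esymmlin (pτ, pξ) (qτ, qξ) a b
        show g (px, e.symm (pτ, pξ)) ^ a * g (qx, e.symm (qτ, qξ)) ^ b
            ≤ g (a • px + b • qx, e.symm (a * pτ + b * qτ, a • pξ + b • qξ))
        rw [h2]
        exact key
    -- rewrite the marginal via Fubini
    have marg_eq : ∀ z : E, ∫⁻ ξ, g (z, ξ) = ∫⁻ ξ', H (z, ξ') := by
      intro z
      have meas1 : Measurable fun ξ : Fin (m + 1) → ℝ => g (z, ξ) :=
        hg.comp (measurable_const.prodMk measurable_id)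
      have meas2 : Measurable fun p : ℝ × (Fin m → ℝ) => g (z, e.symm p) :=
        meas1.comp e.symm.measurable
      calc ∫⁻ ξ, g (z, ξ) = ∫⁻ p : ℝ × (Fin m → ℝ), g (z, e.symm p) :=
            ((mp.symm e).lintegral_comp meas1).symm
        _ = ∫⁻ p : ℝ × (Fin m → ℝ), g (z, e.symm p)
            ∂((volume : Measure ℝ).prod volume) := by rw [← MeasureTheory.Measure.volume_eq_prod]
        _ = ∫⁻ ξ', ∫⁻ τ, g (z, e.symm (τ, ξ')) := lintegral_prod_symm _ meas2.aemeasurable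
        _ = ∫⁻ ξ', H (z, ξ') := rfl
    rw [marg_eq, marg_eq, marg_eq]
    exact IH H hHm hHlc x y s t hs ht hst

end PLAux

/-- If `f` is a measurable nonnegative log-concave function on
`ℝ^d × ℝ^m`, then `F x = ∫ f (x, ξ) dξ` (possibly infinite) is log-concave. -/
theorem marginal_isLogConcave {d m : ℕ}
    (f : EuclideanSpace ℝ (Fin d) × EuclideanSpace ℝ (Fin m) → ℝ)
    (hmeas : Measurable f) (hf0 : ∀ p, 0 ≤ f p) (hflc : IsLogConcave f) :
    ∀ x y : EuclideanSpace ℝ (Fin d), ∀ s t : ℝ, 0 ≤ s → 0 ≤ t → s + t = 1 →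
      (∫⁻ ξ, ENNReal.ofReal (f (x, ξ))) ^ s * (∫⁻ ξ, ENNReal.ofReal (f (y, ξ))) ^ t
        ≤ ∫⁻ ξ, ENNReal.ofReal (f (s • x + t • y, ξ)) := by
  intro x y s t hs ht hst
  set φ := MeasurableEquiv.toLp 2 (Fin m → ℝ) with hφ
  have hφlin : ∀ (u v : Fin m → ℝ) (a b : ℝ), φ (a • u + b • v) = a • φ u + b • φ v :=
    fun u v a b => rfl
  set g : EuclideanSpace ℝ (Fin d) × (Fin m → ℝ) → ℝ≥0∞ :=
    fun p => ENNReal.ofReal (f (p.1, φ p.2)) with hg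
  have hgm : Measurable g :=
    ENNReal.measurable_ofReal.comp (hmeas.comp
      (measurable_fst.prodMk (φ.measurable.comp measurable_snd)))
  have hglc : ∀ p q : EuclideanSpace ℝ (Fin d) × (Fin m → ℝ), ∀ a b : ℝ,
      0 ≤ a → 0 ≤ b → a + b = 1 → g p ^ a * g q ^ b ≤ g (a • p + b • q) := by
    rintro ⟨px, pξ⟩ ⟨qx, qξ⟩ a b ha hb hab
    have key := hflc (px, φ pξ) (qx, φ qξ) a b ha hb hab
    show ENNReal.ofReal (f (px, φ pξ)) ^ a * ENNReal.ofReal (f (qx, φ qξ)) ^ b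
      ≤ ENNReal.ofReal (f (a • px + b • qx, φ (a • pξ + b • qξ)))
    rw [hφlin pξ qξ a b,
      ENNReal.ofReal_rpow_of_nonneg (hf0 _) ha, ENNReal.ofReal_rpow_of_nonneg (hf0 _) hb,
      ← ENNReal.ofReal_mul (Real.rpow_nonneg (hf0 _) _)]
    exact ENNReal.ofReal_le_ofReal key
  have mp : MeasurePreserving φ volume volume :=
    (EuclideanSpace.volume_preserving_symm_measurableEquiv_toLp (Fin m)).symm _
  have transfer : ∀ z : EuclideanSpace ℝ (Fin d),
      ∫⁻ ξ, ENNReal.ofReal (f (z, ξ)) = ∫⁻ ξ', g (z, ξ') := by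
    intro z
    exact (mp.lintegral_comp (ENNReal.measurable_ofReal.comp
      (hmeas.comp (measurable_const.prodMk measurable_id)))).symm
  rw [transfer, transfer, transfer]
  exact marg_pi m g hgm hglc x y s t hs ht hst
end
end

section
/- Let ρ₁ be a finite Borel measure on ℝ^n and ρ₂ a finite Borel measure on ℝ^m, each satisfying the Prékopa–Leindler property on its respective space. Then the product measure ρ₁ ⊗ ρ₂ satisfies the Prékopa–Leindler property on ℝ^n × ℝ^m. -/
open MeasureTheory Pointwise ENNReal

noncomputable section

section Aux

variable {n m : ℕ} (ρ₂ : Measure (EuclideanSpace ℝ (Fin m))) [IsFiniteMeasure ρ₂]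
  (f : EuclideanSpace ℝ (Fin n) × EuclideanSpace ℝ (Fin m) → ℝ)

/-- Slices of a compactly supported function are compactly supported. -/
lemma aux_slice_support (hcf : HasCompactSupport f) (x : EuclideanSpace ℝ (Fin n)) :
    HasCompactSupport (fun y => f (x, y)) := by
  apply HasCompactSupport.intro (hcf.image continuous_snd)
  intro y hy
  by_contra h
  exact hy ⟨(x, y), subset_tsupport f h, rfl⟩

/-- Continuity of the partial integral. -/
lemma aux_cont (hf : Continuous f) (hcf : HasCompactSupport f) :
    Continuous (fun x => ∫ y, f (x, y) ∂ρ₂) := by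
  obtain ⟨C, hC⟩ := hcf.exists_bound_of_continuous hf
  apply continuous_of_dominated (bound := fun _ => C)
  · intro x; exact ((hf.comp (Continuous.prodMk_right x)).aestronglyMeasurable)
  · intro x; filter_upwards with y using hC (x, y)
  · exact integrable_const C
  · filter_upwards with y using hf.comp (continuous_id.prodMk continuous_const)

/-- Compact support of the partial integral. -/
lemma aux_support (hcf : HasCompactSupport f) :
    HasCompactSupport (fun x => ∫ y, f (x, y) ∂ρ₂) := by
  apply HasCompactSupport.intro (hcf.image continuous_fst)
  intro x hx
  have h0 : ∀ y, f (x, y) = 0 := by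
    intro y; by_contra h
    exact hx ⟨(x, y), subset_tsupport f h, rfl⟩
  simp [h0]

end Aux

/-- The product of two finite measures satisfying the
Prékopa–Leindler property also satisfies the Prékopa–Leindler property. -/
theorem prekopaLeindler_prod {n m : ℕ}
    (ρ₁ : Measure (EuclideanSpace ℝ (Fin n))) (ρ₂ : Measure (EuclideanSpace ℝ (Fin m)))
    [IsFiniteMeasure ρ₁] [IsFiniteMeasure ρ₂]
    (h₁ : PrekopaLeindler ρ₁) (h₂ : PrekopaLeindler ρ₂) :
    PrekopaLeindler (ρ₁.prod ρ₂) := by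
  intro s t hs ht hst a b c ha hb hc hca hcb hcc ha0 hb0 hc0 hab
  set A := fun x => ∫ y, a (x, y) ∂ρ₂ with hAdef
  set B := fun x => ∫ y, b (x, y) ∂ρ₂ with hBdef
  set C := fun x => ∫ y, c (x, y) ∂ρ₂ with hCdef
  -- the key pointwise inequality, via Prékopa–Leindler for ρ₂
  have key : ∀ x y, B x ^ s * C y ^ t ≤ A (s • x + t • y) := by
    intro x y
    refine h₂ s t hs ht hst (fun y' => a (s • x + t • y, y')) (fun y' => b (x, y'))
      (fun y' => c (y, y'))
      (ha.comp (Continuous.prodMk_right _)) (hb.comp (Continuous.prodMk_right _))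
      (hc.comp (Continuous.prodMk_right _))
      (aux_slice_support a hca _) (aux_slice_support b hcb _) (aux_slice_support c hcc _)
      (fun _ => ha0 _) (fun _ => hb0 _) (fun _ => hc0 _) ?_
    intro u v
    exact hab (x, u) (y, v)
  -- apply Prékopa–Leindler for ρ₁ to A, B, C
  have main : (∫ x, B x ∂ρ₁) ^ s * (∫ x, C x ∂ρ₁) ^ t ≤ ∫ x, A x ∂ρ₁ :=
    h₁ s t hs ht hst A B C
      (aux_cont ρ₂ a ha hca) (aux_cont ρ₂ b hb hcb) (aux_cont ρ₂ c hc hcc)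
      (aux_support ρ₂ a hca) (aux_support ρ₂ b hcb) (aux_support ρ₂ c hcc)
      (fun x => integral_nonneg fun y => ha0 (x, y))
      (fun x => integral_nonneg fun y => hb0 (x, y))
      (fun x => integral_nonneg fun y => hc0 (x, y))
      key
  -- Fubini
  have fa : ∫ z, a z ∂(ρ₁.prod ρ₂) = ∫ x, A x ∂ρ₁ :=
    integral_prod a (ha.integrable_of_hasCompactSupport hca)
  have fb : ∫ z, b z ∂(ρ₁.prod ρ₂) = ∫ x, B x ∂ρ₁ :=
    integral_prod b (hb.integrable_of_hasCompactSupport hcb)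
  have fc : ∫ z, c z ∂(ρ₁.prod ρ₂) = ∫ x, C x ∂ρ₁ :=
    integral_prod c (hc.integrable_of_hasCompactSupport hcc)
  rw [fa, fb, fc]
  exact main
end
end

section
/- Let ρ be a Borel measure on ℝ^d with a continuous nonnegative density F with respect to Lebesgue measure. If ρ satisfies the Prékopa–Leindler property, then F is log-concave: F(s·x + t·y) ≥ F(x)^s · F(y)^t for all x, y ∈ ℝ^d and s, t ≥ 0 with s + t = 1. -/
open MeasureTheory Pointwise ENNReal

noncomputable section

open Metric Filter Set Topology

def plBump {E : Type*} [PseudoMetricSpace E] (x : E) (r R : ℝ) (u : E) : ℝ :=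
  max 0 (min 1 ((R - dist u x) / (R - r)))

section plBump
variable {E : Type*} [PseudoMetricSpace E] {x u : E} {r R : ℝ}

lemma plBump_nonneg : 0 ≤ plBump x r R u := le_max_left _ _

lemma plBump_le_one : plBump x r R u ≤ 1 :=
  max_le zero_le_one (min_le_left _ _)

lemma plBump_continuous : Continuous (plBump x r R) := by
  apply Continuous.max continuous_const
  exact Continuous.min continuous_const
    ((continuous_const.sub (continuous_id.dist continuous_const)).div_const _)

lemma plBump_eq_one (hrR : r < R) (hu : dist u x ≤ r) : plBump x r R u = 1 := by
  have h1 : (1:ℝ) ≤ (R - dist u x) / (R - r) := by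
    rw [le_div_iff₀ (by linarith)]
    linarith
  simp [plBump, min_eq_left h1]

lemma plBump_eq_zero (hrR : r < R) (hu : R ≤ dist u x) : plBump x r R u = 0 := by
  have hq : (R - dist u x) / (R - r) ≤ 0 :=
    div_nonpos_of_nonpos_of_nonneg (by linarith) (by linarith)
  have : min 1 ((R - dist u x) / (R - r)) ≤ 0 := le_trans (min_le_right _ _) hq
  simp [plBump, max_eq_left this]

lemma plBump_lt_of_ne_zero (hrR : r < R) (hu : plBump x r R u ≠ 0) : dist u x < R := by
  by_contra hc
  exact hu (plBump_eq_zero hrR (not_lt.mp hc))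

lemma plBump_hasCompactSupport [ProperSpace E] (hrR : r < R) :
    HasCompactSupport (plBump x r R) :=
  HasCompactSupport.intro (isCompact_closedBall x R) fun u hu =>
    plBump_eq_zero hrR (le_of_lt (by simpa [dist_comm] using hu))

end plBump


set_option maxHeartbeats 2000000

/-- If a measure with continuous nonnegative density `F` (w.r.t.
Lebesgue measure) satisfies the Prékopa–Leindler property, then `F` is log-concave. -/
theorem isLogConcave_of_prekopaLeindler {d : ℕ}
    (F : EuclideanSpace ℝ (Fin d) → ℝ) (hFc : Continuous F) (hF0 : ∀ x, 0 ≤ F x)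
    (h : PrekopaLeindler (volume.withDensity fun x => ENNReal.ofReal (F x))) :
    IsLogConcave F := by
  intro x y s t hs ht hst
  rcases hs.eq_or_lt with rfl | hs'
  · have ht1 : t = 1 := by linarith
    subst ht1
    simp
  rcases ht.eq_or_lt with rfl | ht'
  · have hs1 : s = 1 := by linarith
    subst hs1
    simp
  rcases (hF0 x).eq_or_lt with hFx | hFx
  · rw [← hFx, Real.zero_rpow hs'.ne', zero_mul]; exact hF0 _
  rcases (hF0 y).eq_or_lt with hFy | hFy
  · rw [← hFy, Real.zero_rpow ht'.ne', mul_zero]; exact hF0 _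
  by_contra hcon
  push_neg at hcon
  set z := s • x + t • y with hz
  -- choose `ε > 0` small
  set g : ℝ → ℝ := fun ε =>
    (F x - ε) ^ s * (F y - ε) ^ t * (1 - ε) ^ d - (F z + ε) * (1 + ε) ^ d with hgdef
  have hgc : ContinuousAt g 0 := by
    apply ContinuousAt.sub
    · exact (((((continuous_const.sub continuous_id).continuousAt).rpow_const (Or.inr hs)).mul
        (((continuous_const.sub continuous_id).continuousAt).rpow_const (Or.inr ht))).mul
        (((continuous_const.sub continuous_id).pow d).continuousAt))
    · exact ((continuous_const.add continuous_id).continuousAt).mul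
        (((continuous_const.add continuous_id).pow d).continuousAt)
  have hg0 : 0 < g 0 := by
    simp only [hgdef, sub_zero, add_zero, one_pow, mul_one]
    linarith
  have hm : 0 < min 1 (min (F x) (F y)) := by
    simp [hFx, hFy]
  have hev1 : ∀ᶠ ε in 𝓝[>] (0:ℝ), 0 < g ε :=
    (hgc.eventually (eventually_gt_nhds hg0)).filter_mono nhdsWithin_le_nhds
  have hev2 : ∀ᶠ ε in 𝓝[>] (0:ℝ), ε ∈ Ioo 0 (min 1 (min (F x) (F y))) :=
    eventually_of_mem (Ioo_mem_nhdsGT_of_mem ⟨le_refl 0, hm⟩) fun ε hε => hε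
  obtain ⟨ε, hgε, hεmem⟩ := (hev1.and hev2).exists
  have hε0 : 0 < ε := hεmem.1
  have hε1 : ε < 1 := lt_of_lt_of_le hεmem.2 (min_le_left _ _)
  have hεx : ε < F x := lt_of_lt_of_le hεmem.2 ((min_le_right _ _).trans (min_le_left _ _))
  have hεy : ε < F y := lt_of_lt_of_le hεmem.2 ((min_le_right _ _).trans (min_le_right _ _))
  -- choose δ by continuity of F at x, y, z
  obtain ⟨δx, hδx0, hδx⟩ := Metric.continuousAt_iff.mp (hFc.continuousAt (x := x)) ε hε0
  obtain ⟨δy, hδy0, hδy⟩ := Metric.continuousAt_iff.mp (hFc.continuousAt (x := y)) ε hε0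
  obtain ⟨δz, hδz0, hδz⟩ := Metric.continuousAt_iff.mp (hFc.continuousAt (x := z)) ε hε0
  set δ : ℝ := min δx (min δy δz) with hδdef
  have hδ0 : 0 < δ := lt_min hδx0 (lt_min hδy0 hδz0)
  have hδle_x : δ ≤ δx := min_le_left _ _
  have hδle_y : δ ≤ δy := (min_le_right _ _).trans (min_le_left _ _)
  have hδle_z : δ ≤ δz := (min_le_right _ _).trans (min_le_right _ _)
  obtain ⟨r, r₁, r₂, hr0, hr₁def, hr₂def, hr₁0, hr₁r, hrr₂, hr₂δ⟩ :
      ∃ r r₁ r₂ : ℝ, 0 < r ∧ r₁ = (1 - ε) * r ∧ r₂ = (1 + ε) * r ∧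
        0 < r₁ ∧ r₁ < r ∧ r < r₂ ∧ r₂ < δ := by
    refine ⟨δ / 2, (1 - ε) * (δ / 2), (1 + ε) * (δ / 2), by positivity, rfl, rfl,
      ?_, ?_, ?_, ?_⟩ <;> nlinarith
  -- bounds for F on the small balls
  have hFx_lb : ∀ u ∈ closedBall x r₁, F x - ε ≤ F u := by
    intro u hu
    have hd : dist u x < δx := lt_of_le_of_lt (mem_closedBall.mp hu)
      (by linarith [hδle_x])
    have := hδx hd
    rw [Real.dist_eq] at this
    linarith [abs_lt.mp this |>.1, abs_lt.mp this |>.2]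
  have hFy_lb : ∀ u ∈ closedBall y r₁, F y - ε ≤ F u := by
    intro u hu
    have hd : dist u y < δy := lt_of_le_of_lt (mem_closedBall.mp hu)
      (by linarith [hδle_y])
    have := hδy hd
    rw [Real.dist_eq] at this
    linarith [abs_lt.mp this |>.1, abs_lt.mp this |>.2]
  have hFz_ub : ∀ u ∈ closedBall z r₂, F u ≤ F z + ε := by
    intro u hu
    have hd : dist u z < δz := lt_of_le_of_lt (mem_closedBall.mp hu)
      (by linarith [hδle_z])
    have := hδz hd
    rw [Real.dist_eq] at this
    linarith [abs_lt.mp this |>.1, abs_lt.mp this |>.2]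
  -- the pointwise Prékopa–Leindler hypothesis for the bump functions
  have hpoint : ∀ u v, plBump x r₁ r u ^ s * plBump y r₁ r v ^ t ≤
      plBump z r r₂ (s • u + t • v) := by
    intro u v
    rcases eq_or_ne (plBump x r₁ r u) 0 with hbu | hbu
    · rw [hbu, Real.zero_rpow hs'.ne', zero_mul]; exact plBump_nonneg
    rcases eq_or_ne (plBump y r₁ r v) 0 with hcv | hcv
    · rw [hcv, Real.zero_rpow ht'.ne', mul_zero]; exact plBump_nonneg
    have hdu : dist u x < r := plBump_lt_of_ne_zero hr₁r hbu
    have hdv : dist v y < r := plBump_lt_of_ne_zero hr₁r hcv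
    have hdz : dist (s • u + t • v) z ≤ r := by
      have heq : s • u + t • v - z = s • (u - x) + t • (v - y) := by
        rw [hz]; module
      calc dist (s • u + t • v) z = ‖s • (u - x) + t • (v - y)‖ := by
            rw [dist_eq_norm, heq]
        _ ≤ s * ‖u - x‖ + t * ‖v - y‖ := by
            refine (norm_add_le _ _).trans ?_
            rw [norm_smul, norm_smul, Real.norm_of_nonneg hs, Real.norm_of_nonneg ht]
        _ ≤ s * r + t * r := by
            have h1 : ‖u - x‖ ≤ r := by rw [← dist_eq_norm]; exact hdu.le
            have h2 : ‖v - y‖ ≤ r := by rw [← dist_eq_norm]; exact hdv.le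
            exact add_le_add (mul_le_mul_of_nonneg_left h1 hs)
              (mul_le_mul_of_nonneg_left h2 ht)
        _ = r := by rw [← add_mul, hst, one_mul]
    rw [plBump_eq_one hrr₂ hdz]
    exact mul_le_one₀ (Real.rpow_le_one plBump_nonneg plBump_le_one hs)
      (Real.rpow_nonneg plBump_nonneg _)
      (Real.rpow_le_one plBump_nonneg plBump_le_one ht)
  -- the measure and the integral identity
  set ρ : Measure (EuclideanSpace ℝ (Fin d)) :=
    volume.withDensity fun u => ENNReal.ofReal (F u) with hρdef
  have hkey : ∀ G : EuclideanSpace ℝ (Fin d) → ℝ,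
      ∫ u, G u ∂ρ = ∫ u, F u * G u := by
    intro G
    have hmeas : Measurable fun u => Real.toNNReal (F u) :=
      measurable_real_toNNReal.comp hFc.measurable
    rw [hρdef,
      show (fun u => ENNReal.ofReal (F u)) =
        fun u => ((Real.toNNReal (F u) : ℝ≥0∞)) from rfl,
      integral_withDensity_eq_integral_smul hmeas]
    congr 1
    ext u
    simp [NNReal.smul_def, Real.coe_toNNReal _ (hF0 u)]
  -- integrability
  have hintb : Integrable (fun u => F u * plBump x r₁ r u) := by
    apply Continuous.integrable_of_hasCompactSupport (hFc.mul plBump_continuous)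
    exact HasCompactSupport.mul_left (plBump_hasCompactSupport hr₁r)
  have hintc : Integrable (fun u => F u * plBump y r₁ r u) := by
    apply Continuous.integrable_of_hasCompactSupport (hFc.mul plBump_continuous)
    exact HasCompactSupport.mul_left (plBump_hasCompactSupport hr₁r)
  have hinta : Integrable (fun u => F u * plBump z r r₂ u) := by
    apply Continuous.integrable_of_hasCompactSupport (hFc.mul plBump_continuous)
    exact HasCompactSupport.mul_left (plBump_hasCompactSupport hrr₂)
  -- lower bounds for ∫ b and ∫ c
  have hlow : ∀ w : EuclideanSpace ℝ (Fin d), (∀ u ∈ closedBall w r₁, F w - ε ≤ F u) →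
      Integrable (fun u => F u * plBump w r₁ r u) →
      (F w - ε) * (volume (closedBall w r₁)).toReal ≤ ∫ u, plBump w r₁ r u ∂ρ := by
    intro w hw hint
    rw [hkey]
    have h1 : ∫ u in closedBall w r₁, F u * plBump w r₁ r u ≤
        ∫ u, F u * plBump w r₁ r u :=
      setIntegral_le_integral hint (Filter.Eventually.of_forall fun u =>
        mul_nonneg (hF0 u) plBump_nonneg)
    have h2 : ∫ _u in closedBall w r₁, (F w - ε) ≤
        ∫ u in closedBall w r₁, F u * plBump w r₁ r u := by
      apply setIntegral_mono_on
        (integrableOn_const measure_closedBall_lt_top.ne)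
        hint.integrableOn measurableSet_closedBall
      intro u hu
      rw [plBump_eq_one hr₁r (mem_closedBall.mp hu), mul_one]
      exact hw u hu
    rw [setIntegral_const, smul_eq_mul, mul_comm, measureReal_def] at h2
    linarith
  -- upper bound for ∫ a
  have hup : ∫ u, plBump z r r₂ u ∂ρ ≤
      (F z + ε) * (volume (closedBall z r₂)).toReal := by
    rw [hkey]
    rw [← setIntegral_eq_integral_of_forall_compl_eq_zero
      (s := closedBall z r₂) (fun u hu => by
        rw [plBump_eq_zero hrr₂ (le_of_lt (by simpa [dist_comm] using hu)), mul_zero])]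
    have h2 : ∫ u in closedBall z r₂, F u * plBump z r r₂ u ≤
        ∫ _u in closedBall z r₂, (F z + ε) := by
      apply setIntegral_mono_on hinta.integrableOn
        (integrableOn_const measure_closedBall_lt_top.ne)
        measurableSet_closedBall
      intro u hu
      calc F u * plBump z r r₂ u ≤ F u * 1 :=
            mul_le_mul_of_nonneg_left plBump_le_one (hF0 u)
        _ = F u := mul_one _
        _ ≤ F z + ε := hFz_ub u hu
    rw [setIntegral_const, smul_eq_mul, mul_comm, measureReal_def] at h2
    linarith
  -- volumes
  set C : ℝ := (volume (closedBall (0 : EuclideanSpace ℝ (Fin d)) 1)).toReal with hCdef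
  have hC : 0 < C :=
    ENNReal.toReal_pos (measure_closedBall_pos volume 0 one_pos).ne'
      measure_closedBall_lt_top.ne
  have hvol : ∀ (w : EuclideanSpace ℝ (Fin d)) (q : ℝ), 0 ≤ q →
      (volume (closedBall w q)).toReal = q ^ d * C := by
    intro w q hq
    rw [Measure.addHaar_closedBall' volume w hq, finrank_euclideanSpace_fin,
      ENNReal.toReal_mul, ENNReal.toReal_ofReal (pow_nonneg hq d)]
  -- apply the Prékopa–Leindler property
  clear_value z g C
  have hPL := h s t hs ht hst (plBump z r r₂) (plBump x r₁ r) (plBump y r₁ r)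
    plBump_continuous plBump_continuous plBump_continuous
    (plBump_hasCompactSupport hrr₂) (plBump_hasCompactSupport hr₁r)
    (plBump_hasCompactSupport hr₁r)
    (fun _ => plBump_nonneg) (fun _ => plBump_nonneg) (fun _ => plBump_nonneg)
    hpoint
  have hFxε : 0 < F x - ε := by linarith
  have hFyε : 0 < F y - ε := by linarith
  have hFzε : 0 ≤ F z + ε := by linarith [hF0 z]
  have hV₁0 : 0 < r₁ ^ d * C := by positivity
  have hbx : (F x - ε) * (r₁ ^ d * C) ≤ ∫ u, plBump x r₁ r u ∂ρ := by
    have := hlow x hFx_lb hintb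
    rwa [hvol x r₁ hr₁0.le] at this
  have hby : (F y - ε) * (r₁ ^ d * C) ≤ ∫ u, plBump y r₁ r u ∂ρ := by
    have := hlow y hFy_lb hintc
    rwa [hvol y r₁ hr₁0.le] at this
  have hua : ∫ u, plBump z r r₂ u ∂ρ ≤ (F z + ε) * (r₂ ^ d * C) := by
    have := hup
    rwa [hvol z r₂ (hr0.trans hrr₂).le] at this
  have hn1 : 0 ≤ (F x - ε) * (r₁ ^ d * C) := mul_nonneg hFxε.le hV₁0.le
  have hn2 : 0 ≤ (F y - ε) * (r₁ ^ d * C) := mul_nonneg hFyε.le hV₁0.le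
  have hA : ((F x - ε) * (r₁ ^ d * C)) ^ s * ((F y - ε) * (r₁ ^ d * C)) ^ t ≤
      (F z + ε) * (r₂ ^ d * C) := by
    refine le_trans (le_trans ?_ hPL) hua
    exact mul_le_mul (Real.rpow_le_rpow hn1 hbx hs)
      (Real.rpow_le_rpow hn2 hby ht)
      (Real.rpow_nonneg hn2 _)
      (Real.rpow_nonneg (le_trans hn1 hbx) _)
  have hLHS : ((F x - ε) * (r₁ ^ d * C)) ^ s * ((F y - ε) * (r₁ ^ d * C)) ^ t =
      (F x - ε) ^ s * (F y - ε) ^ t * (r₁ ^ d * C) := by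
    rw [Real.mul_rpow hFxε.le hV₁0.le, Real.mul_rpow hFyε.le hV₁0.le,
      mul_mul_mul_comm, ← Real.rpow_add hV₁0, hst, Real.rpow_one]
  rw [hLHS] at hA
  -- derive the contradiction
  have hgε' : (F z + ε) * (1 + ε) ^ d <
      (F x - ε) ^ s * (F y - ε) ^ t * (1 - ε) ^ d := by
    have h0 : g ε = (F x - ε) ^ s * (F y - ε) ^ t * (1 - ε) ^ d -
        (F z + ε) * (1 + ε) ^ d := by rw [hgdef]
    linarith [hgε, h0]
  have e1 : r₁ ^ d = (1 - ε) ^ d * r ^ d := by rw [hr₁def, mul_pow]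
  have e2 : r₂ ^ d = (1 + ε) ^ d * r ^ d := by rw [hr₂def, mul_pow]
  rw [e1, e2] at hA
  have hP : (0:ℝ) < r ^ d * C := by positivity
  nlinarith [mul_lt_mul_of_pos_right hgε' hP]
end
end

section
/- Let ρ be a finite Borel measure on ℝ^d satisfying the Prékopa–Leindler property and let F : ℝ^d → ℝ be a convex function. Then the measure ν defined by dν(x) = e^{−F(x)} dρ(x) (the measure with density x ↦ exp(−F(x)) with respect to ρ) also satisfies the Prékopa–Leindler property. -/
open MeasureTheory Pointwise ENNReal

noncomputable section

/-- If `ρ` is a finite measure with the Prékopa–Leindler property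
and `F` is convex, then `dν = exp (-F) dρ` also has the Prékopa–Leindler property. -/
theorem prekopaLeindler_withDensity_exp_neg_convex {d : ℕ}
    (ρ : Measure (EuclideanSpace ℝ (Fin d))) [IsFiniteMeasure ρ]
    (hρ : PrekopaLeindler ρ)
    (F : EuclideanSpace ℝ (Fin d) → ℝ) (hF : ConvexOn ℝ Set.univ F) :
    PrekopaLeindler (ρ.withDensity fun x => ENNReal.ofReal (Real.exp (-F x))) := by
  intro s t hs ht hst a b c ha hb hc hca hcb hcc ha0 hb0 hc0 hineq
  have hFc : Continuous F := by
    rw [← continuousOn_univ]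
    exact ConvexOn.continuousOn isOpen_univ hF
  set w : EuclideanSpace ℝ (Fin d) → ℝ := fun x => Real.exp (-F x) with hw
  have hwc : Continuous w := (hFc.neg).rexp
  have hw0 : ∀ x, 0 ≤ w x := fun x => (Real.exp_pos _).le
  have hwmeas : Measurable fun x => Real.toNNReal (w x) :=
    (hwc.measurable).real_toNNReal
  have key : ∀ g : EuclideanSpace ℝ (Fin d) → ℝ,
      (∫ x, g x ∂(ρ.withDensity fun x => ENNReal.ofReal (w x)))
        = ∫ x, g x * w x ∂ρ := by
    intro g
    have := integral_withDensity_eq_integral_smul (μ := ρ) hwmeas g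
    simp only [NNReal.smul_def, Real.coe_toNNReal _ (hw0 _), smul_eq_mul] at this
    simp only [mul_comm] at this
    rw [← this]
    rfl
  rw [key a, key b, key c]
  -- log-concavity of w
  have hwlc : ∀ x y, w x ^ s * w y ^ t ≤ w (s • x + t • y) := by
    intro x y
    rw [hw]
    rw [← Real.exp_mul, ← Real.exp_mul, ← Real.exp_add]
    apply Real.exp_le_exp.2
    have := hF.2 (Set.mem_univ x) (Set.mem_univ y) hs ht hst
    simp only [smul_eq_mul] at this
    linarith
  exact hρ s t hs ht hst (fun x => a x * w x) (fun x => b x * w x) (fun x => c x * w x)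
    (ha.mul hwc) (hb.mul hwc) (hc.mul hwc)
    (hca.mul_right) (hcb.mul_right) (hcc.mul_right)
    (fun x => mul_nonneg (ha0 x) (hw0 x)) (fun x => mul_nonneg (hb0 x) (hw0 x))
    (fun x => mul_nonneg (hc0 x) (hw0 x))
    (fun x y => by
      rw [Real.mul_rpow (hb0 x) (hw0 x), Real.mul_rpow (hc0 y) (hw0 y)]
      calc b x ^ s * w x ^ s * (c y ^ t * w y ^ t)
          = (b x ^ s * c y ^ t) * (w x ^ s * w y ^ t) := by ring
        _ ≤ a (s • x + t • y) * w (s • x + t • y) :=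
            mul_le_mul (hineq x y) (hwlc x y)
              (mul_nonneg (Real.rpow_nonneg (hw0 x) s) (Real.rpow_nonneg (hw0 y) t))
              (le_trans (mul_nonneg (Real.rpow_nonneg (hb0 x) s) (Real.rpow_nonneg (hc0 y) t)) (hineq x y)))
end
end

section
/- Let α, σ, δ > 0 satisfy 1/δ − 1/α > σ, and let ρ be a finite Borel measure on ℝ^n that is α-super log-concave. Let p_σ(x) = exp(−|x|²/(2σ)). Then the measure on ℝ^n with Lebesgue density x ↦ ∫ p_σ(x − y) dρ(y) is δ-super log-concave; equivalently, the function x ↦ exp(δ|x|²/2) · ∫ p_σ(x − y) dρ(y) is log-concave on ℝ^n. -/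
open MeasureTheory Pointwise ENNReal
open scoped NNReal

noncomputable section

/-- A measure `ρ` on `ℝ^n` is `α`-super log-concave if the measure with density
`x ↦ exp (α/2 * |x|^2)` with respect to `ρ` satisfies the Prékopa–Leindler property. -/
def SuperLogConcave {n : ℕ} (α : ℝ) (ρ : Measure (EuclideanSpace ℝ (Fin n))) : Prop :=
  PrekopaLeindler (ρ.withDensity fun x => ENNReal.ofReal (Real.exp (α / 2 * ‖x‖ ^ 2)))

section Aux

open Real
open scoped RealInnerProductSpace

variable {n : ℕ}
local notation "E" => EuclideanSpace ℝ (Fin n)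

lemma glc_scalar_key {α σ δ : ℝ} (hα : 0 < α) (hσ : 0 < σ) (hδ : 0 < δ)
    (hcond : 1 / δ - 1 / α > σ) (a b : ℝ) :
    δ / 2 * a ^ 2 ≤ (a - b) ^ 2 / (2 * σ) + α / 2 * b ^ 2 := by
  have h1 : σ * (δ * α) < (1 / δ - 1 / α) * (δ * α) :=
    mul_lt_mul_of_pos_right hcond (by positivity)
  have h2 : σ * (δ * α) < α - δ := by
    field_simp at h1; nlinarith
  have h3 : δ * σ < 1 := by nlinarith
  rw [div_add' _ _ _ (by positivity), le_div_iff₀ (by positivity)]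
  nlinarith [sq_nonneg ((1 - δ * σ) * a - b), sq_nonneg (a - b), sq_nonneg b,
    mul_nonneg (sq_nonneg b) (by nlinarith : (0:ℝ) ≤ α - δ - α * δ * σ)]

lemma glc_vec_key {α σ δ : ℝ} (hα : 0 < α) (hσ : 0 < σ) (hδ : 0 < δ)
    (hcond : 1 / δ - 1 / α > σ) (v w : E) :
    δ / 2 * ‖v‖ ^ 2 ≤ ‖v - w‖ ^ 2 / (2 * σ) + α / 2 * ‖w‖ ^ 2 := by
  have h1 : (‖v‖ - ‖w‖) ^ 2 ≤ ‖v - w‖ ^ 2 := by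
    rw [← sq_abs (‖v‖ - ‖w‖)]
    exact pow_le_pow_left₀ (abs_nonneg _) (abs_norm_sub_norm_le v w) 2
  have h2 := glc_scalar_key hα hσ hδ hcond ‖v‖ ‖w‖
  have h3 : (‖v‖ - ‖w‖) ^ 2 / (2 * σ) ≤ ‖v - w‖ ^ 2 / (2 * σ) :=
    div_le_div_of_nonneg_right h1 (by positivity)
  linarith

lemma glc_quad_concave {α σ δ : ℝ} (hα : 0 < α) (hσ : 0 < σ) (hδ : 0 < δ)
    (hcond : 1 / δ - 1 / α > σ) (x y x' y' : E) (s t : ℝ)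
    (hs : 0 ≤ s) (ht : 0 ≤ t) (hst : s + t = 1) :
    s * (δ / 2 * ‖x‖ ^ 2 - ‖x - y‖ ^ 2 / (2 * σ) - α / 2 * ‖y‖ ^ 2) +
      t * (δ / 2 * ‖x'‖ ^ 2 - ‖x' - y'‖ ^ 2 / (2 * σ) - α / 2 * ‖y'‖ ^ 2) ≤
    δ / 2 * ‖s • x + t • x'‖ ^ 2 - ‖(s • x + t • x') - (s • y + t • y')‖ ^ 2 / (2 * σ)
      - α / 2 * ‖s • y + t • y'‖ ^ 2 := by
  have hts : t = 1 - s := by linarith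
  subst hts
  have ecomb : ∀ u v : E, ‖s • u + (1 - s) • v‖ ^ 2
      = s ^ 2 * ‖u‖ ^ 2 + 2 * (s * (1 - s)) * ⟪u, v⟫ + (1 - s) ^ 2 * ‖v‖ ^ 2 := by
    intro u v
    rw [norm_add_sq_real, real_inner_smul_left, real_inner_smul_right,
      norm_smul, norm_smul, Real.norm_eq_abs, Real.norm_eq_abs,
      abs_of_nonneg hs, abs_of_nonneg ht]
    ring
  have hcombsub : (s • x + (1 - s) • x') - (s • y + (1 - s) • y')
      = s • (x - y) + (1 - s) • (x' - y') := by module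
  have hsubswap : (x - x') - (y - y') = (x - y) - (x' - y') := by module
  have key := glc_vec_key hα hσ hδ hcond (x - x') (y - y')
  rw [hsubswap, norm_sub_sq_real x x', norm_sub_sq_real y y',
    norm_sub_sq_real (x - y) (x' - y')] at key
  rw [hcombsub, ecomb x x', ecomb y y', ecomb (x - y) (x' - y')]
  have hkey2 : 0 ≤ s * (1 - s) *
     ((‖x - y‖ ^ 2 - 2 * ⟪x - y, x' - y'⟫ + ‖x' - y'‖ ^ 2) / (2 * σ)
       + α / 2 * (‖y‖ ^ 2 - 2 * ⟪y, y'⟫ + ‖y'‖ ^ 2)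
       - δ / 2 * (‖x‖ ^ 2 - 2 * ⟪x, x'⟫ + ‖x'‖ ^ 2)) :=
    mul_nonneg (mul_nonneg hs ht) (by linarith)
  have hid : δ / 2 * (s ^ 2 * ‖x‖ ^ 2 + 2 * (s * (1 - s)) * ⟪x, x'⟫ + (1 - s) ^ 2 * ‖x'‖ ^ 2) -
        (s ^ 2 * ‖x - y‖ ^ 2 + 2 * (s * (1 - s)) * ⟪x - y, x' - y'⟫ + (1 - s) ^ 2 * ‖x' - y'‖ ^ 2) / (2 * σ) -
      α / 2 * (s ^ 2 * ‖y‖ ^ 2 + 2 * (s * (1 - s)) * ⟪y, y'⟫ + (1 - s) ^ 2 * ‖y'‖ ^ 2)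
      = (s * (δ / 2 * ‖x‖ ^ 2 - ‖x - y‖ ^ 2 / (2 * σ) - α / 2 * ‖y‖ ^ 2) +
      (1 - s) * (δ / 2 * ‖x'‖ ^ 2 - ‖x' - y'‖ ^ 2 / (2 * σ) - α / 2 * ‖y'‖ ^ 2)) +
      s * (1 - s) *
      ((‖x - y‖ ^ 2 - 2 * ⟪x - y, x' - y'⟫ + ‖x' - y'‖ ^ 2) / (2 * σ)
          + α / 2 * (‖y‖ ^ 2 - 2 * ⟪y, y'⟫ + ‖y'‖ ^ 2)
        - δ / 2 * (‖x‖ ^ 2 - 2 * ⟪x, x'⟫ + ‖x'‖ ^ 2)) := by ring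
  rw [hid]
  linarith [hkey2]

/-- The Gaussian-type kernel appearing in the proof. -/
def glcG (α σ δ : ℝ) (z y : E) : ℝ :=
  Real.exp (δ / 2 * ‖z‖ ^ 2 - ‖z - y‖ ^ 2 / (2 * σ) - α / 2 * ‖y‖ ^ 2)

lemma glcG_cont (α σ δ : ℝ) (z : E) : Continuous (glcG (n := n) α σ δ z) := by
  unfold glcG; fun_prop

lemma glcG_pos (α σ δ : ℝ) (z y : E) : 0 < glcG (n := n) α σ δ z y := Real.exp_pos _

/-- The cutoff functions. -/
def glcChi (k : ℕ) (y : E) : ℝ := max 0 (min 1 ((k + 1 : ℝ) - ‖y‖))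

lemma glcChi_cont (k : ℕ) : Continuous (glcChi (n := n) k) := by
  unfold glcChi; fun_prop

lemma glcChi_nonneg (k : ℕ) (y : E) : 0 ≤ glcChi (n := n) k y := le_max_left _ _

lemma glcChi_le_one (k : ℕ) (y : E) : glcChi (n := n) k y ≤ 1 :=
  max_le zero_le_one (min_le_left _ _)

lemma glcChi_eq_one (k : ℕ) (y : E) (h : ‖y‖ ≤ k) : glcChi (n := n) k y = 1 := by
  have : (1:ℝ) ≤ (k + 1 : ℝ) - ‖y‖ := by linarith
  rw [glcChi, min_eq_left this, max_eq_right zero_le_one]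

lemma glcChi_norm_lt (k : ℕ) (y : E) (h : glcChi (n := n) k y ≠ 0) : ‖y‖ < k + 1 := by
  by_contra hc
  push_neg at hc
  apply h
  rw [glcChi, max_eq_left]
  exact (min_le_right _ _).trans (by linarith)

lemma glcChi_compactSupport (k : ℕ) : HasCompactSupport (glcChi (n := n) k) := by
  apply HasCompactSupport.intro (isCompact_closedBall (0 : E) (k + 1))
  intro y hy
  simp only [Metric.mem_closedBall, dist_zero_right, not_le] at hy
  rw [glcChi, max_eq_left]
  exact (min_le_right _ _).trans (by linarith)

end Aux

set_option maxHeartbeats 1000000 in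
/-- If `ρ` is an `α`-super log-concave finite measure and
`1/δ - 1/α > σ` with `α, σ, δ > 0`, then the convolution of `ρ` with the Gaussian
kernel `p_σ (x) = exp (-|x|²/(2σ))` is `δ`-super log-concave; equivalently, the
function `x ↦ exp (δ|x|²/2) * (ρ ⋆ p_σ)(x)` is log-concave. -/
theorem gaussian_convolution_superLogConcave {n : ℕ} (α σ δ : ℝ)
    (hα : 0 < α) (hσ : 0 < σ) (hδ : 0 < δ) (hcond : 1 / δ - 1 / α > σ)
    (ρ : Measure (EuclideanSpace ℝ (Fin n))) [IsFiniteMeasure ρ]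
    (hρ : SuperLogConcave α ρ) :
    IsLogConcave
      (fun x => Real.exp (δ / 2 * ‖x‖ ^ 2) *
        ∫ y, Real.exp (-‖x - y‖ ^ 2 / (2 * σ)) ∂ρ) := by
  intro x x' s t hs ht hst
  simp only []
  -- trivial cases s = 0 or t = 0
  rcases hs.eq_or_lt with rfl | hs0
  · have htt : t = 1 := by linarith
    subst htt
    simp [Real.rpow_zero, Real.rpow_one]
  rcases ht.eq_or_lt with rfl | ht0
  · have hss : s = 1 := by linarith
    subst hss
    simp [Real.rpow_zero, Real.rpow_one]
  set μ : Measure (EuclideanSpace ℝ (Fin n)) :=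
    ρ.withDensity fun y => ENNReal.ofReal (Real.exp (α / 2 * ‖y‖ ^ 2)) with hμ
  set z : EuclideanSpace ℝ (Fin n) := s • x + t • x' with hz
  -- Transfer of integrals from μ to ρ
  have hmeasnn : Measurable fun y : EuclideanSpace ℝ (Fin n) => (Real.exp (α / 2 * ‖y‖ ^ 2)).toNNReal := by
    fun_prop
  have htransfer : ∀ g : EuclideanSpace ℝ (Fin n) → ℝ,
      ∫ y, g y ∂μ = ∫ y, Real.exp (α / 2 * ‖y‖ ^ 2) * g y ∂ρ := by
    intro g
    rw [hμ]
    have : (fun y : EuclideanSpace ℝ (Fin n) => ENNReal.ofReal (Real.exp (α / 2 * ‖y‖ ^ 2)))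
        = fun y : EuclideanSpace ℝ (Fin n) => ((Real.exp (α / 2 * ‖y‖ ^ 2)).toNNReal : ℝ≥0∞) := rfl
    rw [this, integral_withDensity_eq_integral_smul hmeasnn]
    congr 1
    ext y
    rw [NNReal.smul_def, smul_eq_mul, Real.coe_toNNReal _ (Real.exp_nonneg _)]
  -- pointwise identity for the weighted kernel
  have hpoint : ∀ z₀ y : EuclideanSpace ℝ (Fin n), Real.exp (α / 2 * ‖y‖ ^ 2) * glcG α σ δ z₀ y
      = Real.exp (δ / 2 * ‖z₀‖ ^ 2) * Real.exp (-‖z₀ - y‖ ^ 2 / (2 * σ)) := by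
    intro z₀ y
    rw [glcG, ← Real.exp_add, ← Real.exp_add]
    congr 1
    ring
  have hGint : ∀ z₀ : EuclideanSpace ℝ (Fin n), ∫ y, glcG α σ δ z₀ y ∂μ
      = Real.exp (δ / 2 * ‖z₀‖ ^ 2) * ∫ y, Real.exp (-‖z₀ - y‖ ^ 2 / (2 * σ)) ∂ρ := by
    intro z₀
    rw [htransfer]
    simp_rw [hpoint]
    exact integral_const_mul _ _
  -- Integrability of the kernel with respect to μ
  have hGinteg : ∀ z₀ : EuclideanSpace ℝ (Fin n), Integrable (glcG α σ δ z₀) μ := by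
    intro z₀
    rw [hμ]
    have : (fun y : EuclideanSpace ℝ (Fin n) => ENNReal.ofReal (Real.exp (α / 2 * ‖y‖ ^ 2)))
        = fun y : EuclideanSpace ℝ (Fin n) => ((Real.exp (α / 2 * ‖y‖ ^ 2)).toNNReal : ℝ≥0∞) := rfl
    rw [this, integrable_withDensity_iff_integrable_smul hmeasnn]
    have heq : (fun y : EuclideanSpace ℝ (Fin n) => ((Real.exp (α / 2 * ‖y‖ ^ 2)).toNNReal : ℝ≥0) • glcG α σ δ z₀ y)
        = fun y => Real.exp (δ / 2 * ‖z₀‖ ^ 2) * Real.exp (-‖z₀ - y‖ ^ 2 / (2 * σ)) := by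
      ext y
      rw [NNReal.smul_def, smul_eq_mul, Real.coe_toNNReal _ (Real.exp_nonneg _), hpoint]
    rw [heq]
    apply Integrable.mono' (integrable_const (Real.exp (δ / 2 * ‖z₀‖ ^ 2)))
    · exact (by fun_prop : Continuous fun y : EuclideanSpace ℝ (Fin n) =>
        Real.exp (δ / 2 * ‖z₀‖ ^ 2) * Real.exp (-‖z₀ - y‖ ^ 2 / (2 * σ))).aestronglyMeasurable
    · filter_upwards with y
      have hnn : (0:ℝ) ≤ Real.exp (δ / 2 * ‖z₀‖ ^ 2) * Real.exp (-‖z₀ - y‖ ^ 2 / (2 * σ)) := by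
        positivity
      rw [Real.norm_eq_abs, abs_of_nonneg hnn]
      have h1 : Real.exp (-‖z₀ - y‖ ^ 2 / (2 * σ)) ≤ 1 := by
        apply Real.exp_le_one_iff.mpr
        exact div_nonpos_of_nonpos_of_nonneg (neg_nonpos.mpr (by positivity)) (by positivity)
      nlinarith [Real.exp_pos (δ / 2 * ‖z₀‖ ^ 2)]
  -- Main inequality for integrals of the kernel against μ
  have hmain : (∫ y, glcG α σ δ x y ∂μ) ^ s * (∫ y, glcG α σ δ x' y ∂μ) ^ t
      ≤ ∫ y, glcG α σ δ z y ∂μ := by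
    -- approximate via cutoffs and apply Prékopa–Leindler
    have hPL : ∀ k : ℕ,
        (∫ y, glcG α σ δ x y * glcChi k y ∂μ) ^ s *
          (∫ y, glcG α σ δ x' y * glcChi k y ∂μ) ^ t
        ≤ ∫ y, glcG α σ δ z y * glcChi (k + 1) y ∂μ := by
      intro k
      apply hρ s t hs ht hst
        (fun y => glcG α σ δ z y * glcChi (k + 1) y)
        (fun y => glcG α σ δ x y * glcChi k y)
        (fun y => glcG α σ δ x' y * glcChi k y)
      · exact (glcG_cont α σ δ z).mul (glcChi_cont (k + 1))
      · exact (glcG_cont α σ δ x).mul (glcChi_cont k)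
      · exact (glcG_cont α σ δ x').mul (glcChi_cont k)
      · exact (glcChi_compactSupport (k + 1)).mul_left
      · exact (glcChi_compactSupport k).mul_left
      · exact (glcChi_compactSupport k).mul_left
      · exact fun y => mul_nonneg (glcG_pos α σ δ z y).le (glcChi_nonneg _ y)
      · exact fun y => mul_nonneg (glcG_pos α σ δ x y).le (glcChi_nonneg _ y)
      · exact fun y => mul_nonneg (glcG_pos α σ δ x' y).le (glcChi_nonneg _ y)
      · intro y y'
        by_cases hy : glcChi k y = 0
        · rw [hy, mul_zero, Real.zero_rpow hs0.ne', zero_mul]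
          exact mul_nonneg (glcG_pos α σ δ z _).le (glcChi_nonneg _ _)
        by_cases hy' : glcChi k y' = 0
        · rw [hy', mul_zero, Real.zero_rpow ht0.ne', mul_zero]
          exact mul_nonneg (glcG_pos α σ δ z _).le (glcChi_nonneg _ _)
        have hny := glcChi_norm_lt k y hy
        have hny' := glcChi_norm_lt k y' hy'
        have hnormc : ‖s • y + t • y'‖ ≤ (k : ℝ) + 1 := by
          calc ‖s • y + t • y'‖ ≤ ‖s • y‖ + ‖t • y'‖ := norm_add_le _ _
            _ = s * ‖y‖ + t * ‖y'‖ := by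
                rw [norm_smul, norm_smul, Real.norm_eq_abs, Real.norm_eq_abs,
                  abs_of_nonneg hs, abs_of_nonneg ht]
            _ ≤ s * ((k : ℝ) + 1) + t * ((k : ℝ) + 1) := by
                apply add_le_add <;>
                  exact mul_le_mul_of_nonneg_left (by linarith) (by assumption)
            _ = (k : ℝ) + 1 := by nlinarith
        have hchione : glcChi (k + 1) (s • y + t • y') = 1 := by
          apply glcChi_eq_one
          push_cast
          linarith
        rw [hchione, mul_one]
        have hGq : glcG α σ δ x y ^ s * glcG α σ δ x' y' ^ t
            ≤ glcG α σ δ z (s • y + t • y') := by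
          rw [glcG, glcG, glcG, ← Real.exp_mul, ← Real.exp_mul, ← Real.exp_add]
          apply Real.exp_le_exp.mpr
          have := glc_quad_concave hα hσ hδ hcond x y x' y' s t hs ht hst
          rw [hz]
          calc _ = s * (δ / 2 * ‖x‖ ^ 2 - ‖x - y‖ ^ 2 / (2 * σ) - α / 2 * ‖y‖ ^ 2) +
              t * (δ / 2 * ‖x'‖ ^ 2 - ‖x' - y'‖ ^ 2 / (2 * σ) - α / 2 * ‖y'‖ ^ 2) := by ring
            _ ≤ _ := this
        have hchis : glcChi k y ^ s * glcChi k y' ^ t ≤ 1 := by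
          apply mul_le_one₀
          · exact Real.rpow_le_one (glcChi_nonneg _ _) (glcChi_le_one _ _) hs
          · exact Real.rpow_nonneg (glcChi_nonneg _ _) _
          · exact Real.rpow_le_one (glcChi_nonneg _ _) (glcChi_le_one _ _) ht
        calc (glcG α σ δ x y * glcChi k y) ^ s * (glcG α σ δ x' y' * glcChi k y') ^ t
            = (glcG α σ δ x y ^ s * glcG α σ δ x' y' ^ t) *
              (glcChi k y ^ s * glcChi k y' ^ t) := by
              rw [Real.mul_rpow (glcG_pos α σ δ x y).le (glcChi_nonneg _ _),
                Real.mul_rpow (glcG_pos α σ δ x' y').le (glcChi_nonneg _ _)]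
              ring
          _ ≤ glcG α σ δ z (s • y + t • y') * 1 := by
              apply mul_le_mul hGq hchis
              · exact mul_nonneg (Real.rpow_nonneg (glcChi_nonneg _ _) _)
                  (Real.rpow_nonneg (glcChi_nonneg _ _) _)
              · exact (glcG_pos α σ δ z _).le
          _ = glcG α σ δ z (s • y + t • y') := mul_one _
    -- each truncated function is integrable w.r.t. μ
    have hInteg : ∀ (z₀ : EuclideanSpace ℝ (Fin n)) (k : ℕ),
        Integrable (fun y => glcG α σ δ z₀ y * glcChi k y) μ := by
      intro z₀ k
      apply Integrable.mono' (hGinteg z₀)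
      · exact ((glcG_cont α σ δ z₀).mul (glcChi_cont k)).aestronglyMeasurable
      · filter_upwards with y
        rw [Real.norm_eq_abs,
          abs_of_nonneg (mul_nonneg (glcG_pos α σ δ z₀ y).le (glcChi_nonneg _ y))]
        calc glcG α σ δ z₀ y * glcChi k y ≤ glcG α σ δ z₀ y * 1 :=
              mul_le_mul_of_nonneg_left (glcChi_le_one _ _) (glcG_pos α σ δ z₀ y).le
          _ = glcG α σ δ z₀ y := mul_one _
    -- the RHS of hPL is dominated by the full integral
    have hRHS : ∀ k : ℕ, ∫ y, glcG α σ δ z y * glcChi (k + 1) y ∂μ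
        ≤ ∫ y, glcG α σ δ z y ∂μ := by
      intro k
      apply integral_mono (hInteg z (k + 1)) (hGinteg z)
      intro y
      calc glcG α σ δ z y * glcChi (k + 1) y ≤ glcG α σ δ z y * 1 :=
            mul_le_mul_of_nonneg_left (glcChi_le_one _ _) (glcG_pos α σ δ z y).le
        _ = glcG α σ δ z y := mul_one _
    -- convergence of the truncated integrals
    have hconv : ∀ z₀ : EuclideanSpace ℝ (Fin n), Filter.Tendsto
        (fun k : ℕ => ∫ y, glcG α σ δ z₀ y * glcChi k y ∂μ)
        Filter.atTop (nhds (∫ y, glcG α σ δ z₀ y ∂μ)) := by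
      intro z₀
      apply tendsto_integral_of_dominated_convergence (fun y => glcG α σ δ z₀ y)
      · exact fun k => ((glcG_cont α σ δ z₀).mul (glcChi_cont k)).aestronglyMeasurable
      · exact hGinteg z₀
      · intro k
        filter_upwards with y
        rw [Real.norm_eq_abs,
          abs_of_nonneg (mul_nonneg (glcG_pos α σ δ z₀ y).le (glcChi_nonneg _ y))]
        calc glcG α σ δ z₀ y * glcChi k y ≤ glcG α σ δ z₀ y * 1 :=
              mul_le_mul_of_nonneg_left (glcChi_le_one _ _) (glcG_pos α σ δ z₀ y).le
          _ = glcG α σ δ z₀ y := mul_one _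
      · filter_upwards with y
        apply Filter.Tendsto.congr' _ tendsto_const_nhds
        rw [Filter.EventuallyEq, Filter.eventually_atTop]
        refine ⟨⌈‖y‖⌉₊, fun k hk => ?_⟩
        have : ‖y‖ ≤ (k : ℝ) := (Nat.le_ceil _).trans (by exact_mod_cast hk)
        rw [glcChi_eq_one k y this, mul_one]
    -- pass to the limit
    have htendsto : Filter.Tendsto
        (fun k : ℕ => (∫ y, glcG α σ δ x y * glcChi k y ∂μ) ^ s *
          (∫ y, glcG α σ δ x' y * glcChi k y ∂μ) ^ t)
        Filter.atTop
        (nhds ((∫ y, glcG α σ δ x y ∂μ) ^ s * (∫ y, glcG α σ δ x' y ∂μ) ^ t)) :=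
      ((hconv x).rpow_const (Or.inr hs)).mul ((hconv x').rpow_const (Or.inr ht))
    exact le_of_tendsto htendsto
      (Filter.Eventually.of_forall fun k => (hPL k).trans (hRHS k))
  rw [hGint x, hGint x', hGint z] at hmain
  exact hmain
end
end

section
/- Let (ρ_n)_{n≥1} be a sequence of finite Borel measures on ℝ^d converging weakly to a finite Borel measure ρ, and suppose that ρ_n is α_n-super log-concave for each n, where α_n ≥ 0. Then ρ is α₀-super log-concave with α₀ = inf_n α_n. -/
open MeasureTheory Pointwise ENNReal

noncomputable section

lemma integral_withDensity_exp {d : ℕ} (μ : Measure (EuclideanSpace ℝ (Fin d))) (β : ℝ)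
    (f : EuclideanSpace ℝ (Fin d) → ℝ) :
    ∫ x, f x ∂(μ.withDensity fun x => ENNReal.ofReal (Real.exp (β / 2 * ‖x‖ ^ 2)))
      = ∫ x, Real.exp (β / 2 * ‖x‖ ^ 2) * f x ∂μ := by
  have hcont : Continuous fun x : EuclideanSpace ℝ (Fin d) =>
      (Real.exp (β / 2 * ‖x‖ ^ 2)).toNNReal :=
    continuous_real_toNNReal.comp (Real.continuous_exp.comp (by continuity))
  rw [show (fun x : EuclideanSpace ℝ (Fin d) => ENNReal.ofReal (Real.exp (β / 2 * ‖x‖ ^ 2)))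
      = fun x => ((Real.exp (β / 2 * ‖x‖ ^ 2)).toNNReal : ℝ≥0∞) from rfl,
    integral_withDensity_eq_integral_smul hcont.measurable]
  refine integral_congr_ae (Filter.Eventually.of_forall fun x => ?_)
  simp [NNReal.smul_def, Real.coe_toNNReal _ (Real.exp_nonneg _)]

lemma normsq_convex {d : ℕ} (x y : EuclideanSpace ℝ (Fin d)) {s t : ℝ}
    (hs : 0 ≤ s) (ht : 0 ≤ t) (hst : s + t = 1) :
    ‖s • x + t • y‖ ^ 2 ≤ s * ‖x‖ ^ 2 + t * ‖y‖ ^ 2 := by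
  have h1 : ‖s • x + t • y‖ ≤ s * ‖x‖ + t * ‖y‖ := by
    calc ‖s • x + t • y‖ ≤ ‖s • x‖ + ‖t • y‖ := norm_add_le _ _
    _ = s * ‖x‖ + t * ‖y‖ := by
        rw [norm_smul, norm_smul, Real.norm_of_nonneg hs, Real.norm_of_nonneg ht]
  have h0 : 0 ≤ ‖s • x + t • y‖ := norm_nonneg _
  nlinarith [norm_nonneg x, norm_nonneg y, sq_nonneg (‖x‖ - ‖y‖),
    mul_nonneg hs ht]

/-- If `ρ_n` is `α_n`-super log-concave for each `n` and
`ρ_n → ρ` weakly, then `ρ` is `inf_n α_n`-super log-concave. -/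
theorem superLogConcave_of_weak_limit {d : ℕ}
    (ρs : ℕ → Measure (EuclideanSpace ℝ (Fin d)))
    (ρ : Measure (EuclideanSpace ℝ (Fin d)))
    [∀ n, IsFiniteMeasure (ρs n)] [IsFiniteMeasure ρ]
    (α : ℕ → ℝ) (hα : ∀ n, 0 ≤ α n)
    (hSLC : ∀ n, SuperLogConcave (α n) (ρs n))
    (hconv : ∀ f : EuclideanSpace ℝ (Fin d) → ℝ, Continuous f → (∃ C, ∀ x, |f x| ≤ C) →
      Filter.Tendsto (fun n => ∫ x, f x ∂(ρs n)) Filter.atTop (nhds (∫ x, f x ∂ρ))) :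
    SuperLogConcave (⨅ n, α n) ρ := by
  set α₀ : ℝ := ⨅ n, α n with hα₀def
  have hbdd : BddBelow (Set.range α) := ⟨0, by rintro _ ⟨n, rfl⟩; exact hα n⟩
  have hα₀le : ∀ n, α₀ ≤ α n := fun n => ciInf_le hbdd n
  intro s t hs ht hst a b c ha hb hc hsa hsb hsc ha0 hb0 hc0 hineq
  -- weighted functions (with weight α₀)
  set E : EuclideanSpace ℝ (Fin d) → ℝ := fun x => Real.exp (α₀ / 2 * ‖x‖ ^ 2) with hE
  have hEcont : Continuous E := Real.continuous_exp.comp (by continuity)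
  have hEpos : ∀ x, 0 < E x := fun x => Real.exp_pos _
  -- limits
  have key : ∀ g : EuclideanSpace ℝ (Fin d) → ℝ, Continuous g → HasCompactSupport g →
      Filter.Tendsto (fun n => ∫ x, E x * g x ∂(ρs n)) Filter.atTop
        (nhds (∫ x, E x * g x ∂ρ)) := by
    intro g hg hgs
    have hcont : Continuous fun x => E x * g x := hEcont.mul hg
    have hcs : HasCompactSupport fun x => E x * g x := hgs.mul_left
    obtain ⟨C, hC⟩ := hcs.exists_bound_of_continuous hcont
    exact hconv _ hcont ⟨C, fun x => by rw [abs_mul]; simpa [Real.norm_eq_abs, abs_mul] using hC x⟩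
  -- inequality for each n
  have step : ∀ n, (∫ x, E x * b x ∂(ρs n)) ^ s * (∫ x, E x * c x ∂(ρs n)) ^ t
      ≤ ∫ x, E x * a x ∂(ρs n) := by
    intro n
    set γ : ℝ := α₀ - α n with hγ
    have hγ0 : γ ≤ 0 := by simp [hγ, hα₀le n]
    set G : EuclideanSpace ℝ (Fin d) → ℝ := fun x => Real.exp (γ / 2 * ‖x‖ ^ 2) with hG
    have hGcont : Continuous G := Real.continuous_exp.comp (by continuity)
    have hGpos : ∀ x, 0 < G x := fun x => Real.exp_pos _
    have h := hSLC n s t hs ht hst (fun x => a x * G x) (fun x => b x * G x)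
      (fun x => c x * G x) (ha.mul hGcont) (hb.mul hGcont) (hc.mul hGcont)
      (hsa.mul_right) (hsb.mul_right) (hsc.mul_right)
      (fun x => mul_nonneg (ha0 x) (hGpos x).le)
      (fun x => mul_nonneg (hb0 x) (hGpos x).le)
      (fun x => mul_nonneg (hc0 x) (hGpos x).le) ?_
    · rw [integral_withDensity_exp, integral_withDensity_exp, integral_withDensity_exp] at h
      have hrw : ∀ g : EuclideanSpace ℝ (Fin d) → ℝ,
          (fun x => Real.exp (α n / 2 * ‖x‖ ^ 2) * (g x * G x)) = fun x => E x * g x := by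
        intro g; funext x
        rw [hG, hE, mul_comm (g x), ← mul_assoc, ← Real.exp_add]
        rw [hγ]
        ring_nf
      rwa [hrw a, hrw b, hrw c] at h
    · intro x y
      have h1 : b x ^ s * c y ^ t ≤ a (s • x + t • y) := hineq x y
      have h2 : G x ^ s * G y ^ t ≤ G (s • x + t • y) := by
        rw [hG]
        rw [← Real.exp_mul, ← Real.exp_mul, ← Real.exp_add]
        apply Real.exp_le_exp.2
        have := normsq_convex x y hs ht hst
        nlinarith
      calc (b x * G x) ^ s * (c y * G y) ^ t
          = (b x ^ s * c y ^ t) * (G x ^ s * G y ^ t) := by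
            rw [Real.mul_rpow (hb0 x) (hGpos x).le, Real.mul_rpow (hc0 y) (hGpos y).le]; ring
        _ ≤ a (s • x + t • y) * G (s • x + t • y) := by
            apply mul_le_mul h1 h2 (mul_nonneg (Real.rpow_nonneg (hGpos x).le s)
              (Real.rpow_nonneg (hGpos y).le t))
            exact ha0 _
  -- pass to the limit
  rw [integral_withDensity_exp, integral_withDensity_exp, integral_withDensity_exp]
  have hB := key b hb hsb
  have hC' := key c hc hsc
  have hA := key a ha hsa
  exact le_of_tendsto_of_tendsto'
    ((hB.rpow_const (Or.inr hs)).mul (hC'.rpow_const (Or.inr ht))) hA step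
end
end
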